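/- For each 1 ≤ k ≤ m, define θ_k on 𝒩_k as follows: for (N, A) ∈ 𝒩_k, let M′ = ₋ₐ(M ∖ (E_{k−1} − N) / N); set θ_k(N, A) = (N − {e_k}, A) if e_k ∈ N; θ_k(N, A) = (N, A) if e_k ∉ N and ₋{e_k}M′ is not acyclic; θ_k(N, A) = (N, A ∪ {e_k}) if e_k ∉ N and ₋{e_k}M′ is acyclic. Then θ_k maps 𝒩_k into 𝒩_{k−1} and is a two-sided inverse of ψ_k: θ_k(ψ_k(N, A)) = (N, A) for all (N, A) ∈ 𝒩_{k−1} and ψ_k(θ_k(N, A)) = (N, A) for all (N, A) ∈ 𝒩_k. -/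
import Mathlib

open Finset

/-- The support of a signed subset `X = (X⁺, X⁻)`. -/
def supp {α : Type} [DecidableEq α] (X : Finset α × Finset α) : Finset α := X.1 ∪ X.2

/-- An oriented matroid on ground set `α`, given by its collection of signed circuits,
satisfying the signed circuit axioms (C1)-(C4). -/
structure OM (α : Type) [DecidableEq α] where
  C : Set (Finset α × Finset α)
  disj : ∀ X ∈ C, Disjoint X.1 X.2
  not_empty_mem : ((∅ : Finset α), (∅ : Finset α)) ∉ C
  neg_mem : ∀ X ∈ C, (X.2, X.1) ∈ C
  incomp : ∀ X ∈ C, ∀ Y ∈ C, supp X ⊆ supp Y → X = Y ∨ X = (Y.2, Y.1)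
  elimAx : ∀ X ∈ C, ∀ Y ∈ C, X ≠ Y → X ≠ (Y.2, Y.1) → ∀ e ∈ X.1 ∩ Y.2,
    ∃ Z ∈ C, Z.1 ⊆ (X.1 ∪ Y.1).erase e ∧ Z.2 ⊆ (X.2 ∪ Y.2).erase e

/-- A collection of signed subsets is acyclic if it contains no positive member. -/
def Acyclic {α : Type} (C : Set (Finset α × Finset α)) : Prop :=
  ∀ X ∈ C, X.2 ≠ ∅

/-- Reorientation of a signed subset by `A`. -/
def reorient {α : Type} [DecidableEq α] (A : Finset α) (X : Finset α × Finset α) :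
    Finset α × Finset α :=
  ((X.1 \ A) ∪ (X.2 ∩ A), (X.2 \ A) ∪ (X.1 ∩ A))

/-- Reorientation of a collection of signed subsets by `A`. -/
def reorientC {α : Type} [DecidableEq α] (A : Finset α)
    (C : Set (Finset α × Finset α)) : Set (Finset α × Finset α) :=
  reorient A '' C

/-- Deletion: keep the members whose support avoids `D`. -/
def delC {α : Type} [DecidableEq α] (D : Finset α)
    (C : Set (Finset α × Finset α)) : Set (Finset α × Finset α) :=
  {X ∈ C | Disjoint (supp X) D}

/-- The pre-circuits of the contraction by `T`. -/
def contrPre {α : Type} [DecidableEq α] (T : Finset α)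
    (C : Set (Finset α × Finset α)) : Set (Finset α × Finset α) :=
  {Z | ∃ Y ∈ C, supp Y \ T ≠ ∅ ∧ Z = (Y.1 \ T, Y.2 \ T)}

/-- Contraction: the support-inclusion-minimal members of `contrPre T C`. -/
def contrC {α : Type} [DecidableEq α] (T : Finset α)
    (C : Set (Finset α × Finset α)) : Set (Finset α × Finset α) :=
  {Z ∈ contrPre T C | ∀ W ∈ contrPre T C, supp W ⊆ supp Z → supp W = supp Z}


/-- `N` is an NBC subset of the underlying matroid of `M`: it contains no
broken circuit, i.e. no circuit of the underlying matroid with its maximal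
element deleted. -/
def IsNBC {α : Type} [DecidableEq α] [LinearOrder α] (M : OM α) (N : Finset α) : Prop :=
  ∀ X ∈ M.C, ∀ h : (supp X).Nonempty, ¬ (supp X).erase ((supp X).max' h) ⊆ N

/-- `E_k = {e₁, …, e_k}`: the first `k` elements of the ground set `Fin m`. -/
def Ek (m k : ℕ) : Finset (Fin m) := Finset.filter (fun i => (i : ℕ) < k) Finset.univ

/-- `M` is loopless: no signed circuit has support of size one. -/
def Loopless {m : ℕ} (M : OM (Fin m)) : Prop := ∀ X ∈ M.C, (supp X).card ≠ 1

/-- `M(N, A) = ₋ₐ(M ∖ (E_k − N) / N)`. -/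
def MNA {m : ℕ} (M : OM (Fin m)) (k : ℕ) (N A : Finset (Fin m)) :
    Set (Finset (Fin m) × Finset (Fin m)) :=
  reorientC A (contrC N (delC (Ek m k \ N) M.C))

/-- The set `𝒩_k` of pairs `(N, A)` with `N ⊆ E_k` an NBC subset of the underlying
matroid, `A ⊆ E − E_k`, and `M(N, A)` acyclic. -/
def NFam {m : ℕ} (M : OM (Fin m)) (k : ℕ) : Set (Finset (Fin m) × Finset (Fin m)) :=
  {p | p.1 ⊆ Ek m k ∧ IsNBC M p.1 ∧ p.2 ⊆ (Ek m k)ᶜ ∧ Acyclic (MNA M k p.1 p.2)}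

open scoped Classical in
/-- The map `ψ_k` (where `j = k - 1` and `e = e_k`), defined on `𝒩_{k-1}`:
`ψ_k(N, A) = (N ∪ {e_k}, A)` if `e_k ∉ A` and `₋{e_k}M(N, A)` is acyclic,
`ψ_k(N, A) = (N, A)` if `e_k ∉ A` and `₋{e_k}M(N, A)` is not acyclic, and
`ψ_k(N, A) = (N, A − {e_k})` if `e_k ∈ A`. -/
noncomputable def psi {m : ℕ} (M : OM (Fin m)) (j : ℕ) (e : Fin m)
    (p : Finset (Fin m) × Finset (Fin m)) : Finset (Fin m) × Finset (Fin m) :=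
  if e ∈ p.2 then (p.1, p.2.erase e)
  else if Acyclic (reorientC {e} (MNA M j p.1 p.2)) then (insert e p.1, p.2)
  else p

open scoped Classical in
/-- The map `θ_k` (where `j = k - 1` and `e = e_k`), defined on `𝒩_k` via
`M′ = ₋ₐ(M ∖ (E_{k−1} − N) / N)`:
`θ_k(N, A) = (N − {e_k}, A)` if `e_k ∈ N`,
`θ_k(N, A) = (N, A)` if `e_k ∉ N` and `₋{e_k}M′` is not acyclic, and
`θ_k(N, A) = (N, A ∪ {e_k})` if `e_k ∉ N` and `₋{e_k}M′` is acyclic. -/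
noncomputable def theta {m : ℕ} (M : OM (Fin m)) (j : ℕ) (e : Fin m)
    (p : Finset (Fin m) × Finset (Fin m)) : Finset (Fin m) × Finset (Fin m) :=
  if e ∈ p.1 then (p.1.erase e, p.2)
  else if Acyclic (reorientC {e} (MNA M j p.1 p.2)) then (p.1, insert e p.2)
  else p


namespace OMAux

variable {α : Type} [DecidableEq α]

/-- restriction of a signed set -/
def res (T : Finset α) (X : Finset α × Finset α) : Finset α × Finset α :=
  (X.1 \ T, X.2 \ T)

lemma supp_res (T : Finset α) (X : Finset α × Finset α) :
    supp (res T X) = supp X \ T := by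
  simp [supp, res, Finset.union_sdiff_distrib]

lemma res_res (S T : Finset α) (X : Finset α × Finset α) :
    res T (res S X) = res (S ∪ T) X := by
  simp only [res, Prod.mk.injEq]
  constructor <;> · ext x; simp [mem_sdiff, mem_union]; tauto

lemma res_empty (X : Finset α × Finset α) : res (∅ : Finset α) X = X := by
  simp [res]

lemma res_swap (T : Finset α) (X : Finset α × Finset α) :
    res T (X.2, X.1) = ((res T X).2, (res T X).1) := rfl

lemma supp_eq_empty_iff (X : Finset α × Finset α) : supp X = ∅ ↔ X = (∅, ∅) := by
  constructor
  · intro h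
    have h1 : X.1 = ∅ := by
      rw [← Finset.subset_empty, ← h]; exact Finset.subset_union_left
    have h2 : X.2 = ∅ := by
      rw [← Finset.subset_empty, ← h]; exact Finset.subset_union_right
    exact Prod.ext h1 h2
  · intro h; rw [h]; simp [supp]

lemma supp_swap (X : Finset α × Finset α) : supp (X.2, X.1) = supp X := by
  simp [supp, Finset.union_comm]

lemma OM.supp_nonempty (M : OM α) {X : Finset α × Finset α} (hX : X ∈ M.C) :
    (supp X).Nonempty := by
  rcases Finset.eq_empty_or_nonempty (supp X) with h | h
  · exact absurd ((supp_eq_empty_iff X).1 h ▸ hX) M.not_empty_mem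
  · exact h

/-! ### contrPre / contrC basics -/

lemma mem_contrPre {T : Finset α} {C : Set (Finset α × Finset α)}
    {Z : Finset α × Finset α} :
    Z ∈ contrPre T C ↔ ∃ Y ∈ C, (supp Y \ T).Nonempty ∧ Z = res T Y := by
  simp only [contrPre, Set.mem_setOf_eq, res, ← Finset.nonempty_iff_ne_empty]

lemma contrC_subset_contrPre {T : Finset α} {C : Set (Finset α × Finset α)} :
    contrC T C ⊆ contrPre T C := fun _ h => h.1

lemma supp_nonempty_of_mem_contrPre {T : Finset α} {C : Set (Finset α × Finset α)}
    {Z : Finset α × Finset α} (h : Z ∈ contrPre T C) : (supp Z).Nonempty := by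
  rcases mem_contrPre.1 h with ⟨Y, _, hne, rfl⟩
  rwa [supp_res]

lemma disjoint_supp_of_mem_contrPre {T : Finset α} {C : Set (Finset α × Finset α)}
    {Z : Finset α × Finset α} (h : Z ∈ contrPre T C) : Disjoint (supp Z) T := by
  rcases mem_contrPre.1 h with ⟨Y, _, hne, rfl⟩
  rw [supp_res]; exact Finset.sdiff_disjoint

lemma contrC_empty (M : OM α) : contrC (∅ : Finset α) M.C = M.C := by
  have hpre : contrPre (∅ : Finset α) M.C = M.C := by
    ext Z
    rw [mem_contrPre]
    constructor
    · rintro ⟨Y, hY, _, rfl⟩; rwa [res_empty]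
    · intro hZ
      exact ⟨Z, hZ, by simpa using (OM.supp_nonempty M hZ), (res_empty Z).symm⟩
  ext Z
  constructor
  · intro h; have := h.1; rwa [hpre] at this
  · intro hZ
    refine ⟨by rwa [hpre], ?_⟩
    intro W hW hsub
    rw [hpre] at hW
    rcases M.incomp W hW Z hZ hsub with rfl | rfl
    · rfl
    · exact supp_swap Z

end OMAux

namespace OMAux

variable {α : Type} [DecidableEq α]

/-! ### reorient algebra -/

lemma mem_reorient_fst {A : Finset α} {X : Finset α × Finset α} {x : α} :
    x ∈ (reorient A X).1 ↔ (x ∈ X.1 ∧ x ∉ A) ∨ (x ∈ X.2 ∧ x ∈ A) := by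
  simp [reorient, mem_union, mem_sdiff, mem_inter]

lemma mem_reorient_snd {A : Finset α} {X : Finset α × Finset α} {x : α} :
    x ∈ (reorient A X).2 ↔ (x ∈ X.2 ∧ x ∉ A) ∨ (x ∈ X.1 ∧ x ∈ A) := by
  simp [reorient, mem_union, mem_sdiff, mem_inter]

lemma supp_reorient (A : Finset α) (X : Finset α × Finset α) :
    supp (reorient A X) = supp X := by
  ext x
  simp only [supp, mem_union, mem_reorient_fst, mem_reorient_snd]
  by_cases h : x ∈ A <;> tauto

lemma reorient_reorient (A B : Finset α) (X : Finset α × Finset α) :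
    reorient B (reorient A X) = reorient (symmDiff A B) X := by
  have hd : ∀ x, x ∈ symmDiff A B ↔ (x ∈ A ∧ x ∉ B) ∨ (x ∈ B ∧ x ∉ A) := by
    intro x; rw [Finset.mem_symmDiff]
  refine Prod.ext ?_ ?_ <;> · ext x
                              simp only [mem_reorient_fst, mem_reorient_snd, hd]
                              tauto

lemma reorient_self (A : Finset α) (X : Finset α × Finset α) :
    reorient A (reorient A X) = X := by
  rw [reorient_reorient, symmDiff_self]
  simp [reorient, Finset.bot_eq_empty]

lemma reorient_empty (X : Finset α × Finset α) : reorient (∅ : Finset α) X = X := by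
  simp [reorient]

lemma reorient_insert {A : Finset α} {e : α} (he : e ∉ A) (X : Finset α × Finset α) :
    reorient {e} (reorient A X) = reorient (insert e A) X := by
  rw [reorient_reorient]
  congr 1
  ext x
  simp [Finset.mem_symmDiff, mem_insert]
  constructor
  · rintro (⟨h1, h2⟩ | ⟨rfl, _⟩) <;> tauto
  · rintro (rfl | h)
    · exact Or.inr ⟨rfl, fun h => he h⟩
    · exact Or.inl ⟨h, fun hx => he (hx ▸ h)⟩

lemma reorient_of_disjoint {A : Finset α} {X : Finset α × Finset α}
    (h : Disjoint (supp X) A) : reorient A X = X := by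
  have h1 : ∀ x ∈ X.1, x ∉ A := fun x hx =>
    Finset.disjoint_left.1 h (Finset.mem_union.2 (Or.inl hx))
  have h2 : ∀ x ∈ X.2, x ∉ A := fun x hx =>
    Finset.disjoint_left.1 h (Finset.mem_union.2 (Or.inr hx))
  refine Prod.ext ?_ ?_ <;>
  · ext x
    simp only [mem_reorient_fst, mem_reorient_snd]
    constructor
    · rintro (⟨ha, _⟩ | ⟨ha, hb⟩)
      · exact ha
      · exact absurd hb (by first | exact h1 x ha | exact h2 x ha)
    · intro hx
      exact Or.inl ⟨hx, by first | exact h1 x hx | exact h2 x hx⟩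

lemma reorient_swap (A : Finset α) (X : Finset α × Finset α) :
    reorient A (X.2, X.1) = ((reorient A X).2, (reorient A X).1) := rfl

lemma reorient_res (A T : Finset α) (X : Finset α × Finset α) :
    reorient A (res T X) = res T (reorient A X) := by
  refine Prod.ext ?_ ?_ <;>
  · ext x
    simp only [res, mem_reorient_fst, mem_reorient_snd, mem_sdiff]
    tauto

lemma reorient_injective (A : Finset α) : Function.Injective (reorient A) := by
  intro X Y h
  have := congrArg (reorient A) h
  rwa [reorient_self, reorient_self] at this

lemma mem_reorientC {A : Finset α} {C : Set (Finset α × Finset α)}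
    {X : Finset α × Finset α} :
    X ∈ reorientC A C ↔ reorient A X ∈ C := by
  constructor
  · rintro ⟨Y, hY, rfl⟩; rwa [reorient_self]
  · intro h; exact ⟨reorient A X, h, reorient_self A X⟩

/-! ### reorientation and deletion of an OM are OMs -/

lemma reorient_erase_bound {A : Finset α} {q : α}
    {Z X Y : Finset α × Finset α}
    (h1 : Z.1 ⊆ (X.1 ∪ Y.1).erase q) (h2 : Z.2 ⊆ (X.2 ∪ Y.2).erase q) :
    (reorient A Z).1 ⊆ ((reorient A X).1 ∪ (reorient A Y).1).erase q ∧
    (reorient A Z).2 ⊆ ((reorient A X).2 ∪ (reorient A Y).2).erase q := by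
  constructor
  · intro x hx
    rw [mem_reorient_fst] at hx
    rw [Finset.mem_erase, Finset.mem_union]
    rcases hx with ⟨ha, hb⟩ | ⟨ha, hb⟩
    · have := h1 ha
      rw [Finset.mem_erase, Finset.mem_union] at this
      refine ⟨this.1, ?_⟩
      rcases this.2 with h | h
      · exact Or.inl (mem_reorient_fst.2 (Or.inl ⟨h, hb⟩))
      · exact Or.inr (mem_reorient_fst.2 (Or.inl ⟨h, hb⟩))
    · have := h2 ha
      rw [Finset.mem_erase, Finset.mem_union] at this
      refine ⟨this.1, ?_⟩
      rcases this.2 with h | h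
      · exact Or.inl (mem_reorient_fst.2 (Or.inr ⟨h, hb⟩))
      · exact Or.inr (mem_reorient_fst.2 (Or.inr ⟨h, hb⟩))
  · intro x hx
    rw [mem_reorient_snd] at hx
    rw [Finset.mem_erase, Finset.mem_union]
    rcases hx with ⟨ha, hb⟩ | ⟨ha, hb⟩
    · have := h2 ha
      rw [Finset.mem_erase, Finset.mem_union] at this
      refine ⟨this.1, ?_⟩
      rcases this.2 with h | h
      · exact Or.inl (mem_reorient_snd.2 (Or.inl ⟨h, hb⟩))
      · exact Or.inr (mem_reorient_snd.2 (Or.inl ⟨h, hb⟩))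
    · have := h1 ha
      rw [Finset.mem_erase, Finset.mem_union] at this
      refine ⟨this.1, ?_⟩
      rcases this.2 with h | h
      · exact Or.inl (mem_reorient_snd.2 (Or.inr ⟨h, hb⟩))
      · exact Or.inr (mem_reorient_snd.2 (Or.inr ⟨h, hb⟩))

def reorOM (M : OM α) (A : Finset α) : OM α where
  C := reorientC A M.C
  disj := by
    rintro X ⟨Y, hY, rfl⟩
    have h := M.disj Y hY
    rw [Finset.disjoint_left]
    intro x hx1 hx2
    rw [mem_reorient_fst] at hx1
    rw [mem_reorient_snd] at hx2
    rcases hx1 with ⟨h1, h2⟩ | ⟨h1, h2⟩ <;> rcases hx2 with ⟨h3, h4⟩ | ⟨h3, h4⟩ <;>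
      first
        | exact absurd h3 (Finset.disjoint_left.1 h h1)
        | exact absurd h1 (Finset.disjoint_left.1 h h3)
        | exact h4 h2
        | exact h2 h4
  not_empty_mem := by
    intro h
    rw [mem_reorientC] at h
    have he : reorient A ((∅ : Finset α), (∅ : Finset α)) = ((∅ : Finset α), (∅ : Finset α)) := by
      simp [reorient]
    rw [he] at h
    exact M.not_empty_mem h
  neg_mem := by
    rintro X ⟨X₀, hX₀, rfl⟩
    exact ⟨(X₀.2, X₀.1), M.neg_mem X₀ hX₀, (reorient_swap A X₀).symm ▸ rfl⟩
  incomp := by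
    rintro X ⟨X₀, hX₀, rfl⟩ Y ⟨Y₀, hY₀, rfl⟩ hsub
    rw [supp_reorient, supp_reorient] at hsub
    rcases M.incomp X₀ hX₀ Y₀ hY₀ hsub with h | h
    · exact Or.inl (by rw [h])
    · right
      rw [h, reorient_swap]
  elimAx := by
    rintro X ⟨X₀, hX₀, rfl⟩ Y ⟨Y₀, hY₀, rfl⟩ hne hne' q hq
    have hne1 : X₀ ≠ Y₀ := fun h => hne (by rw [h])
    have hne2 : X₀ ≠ (Y₀.2, Y₀.1) := fun h => hne' (by rw [h, reorient_swap])
    rw [Finset.mem_inter] at hq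
    have hq1 := mem_reorient_fst.1 hq.1
    have hq2 := mem_reorient_snd.1 hq.2
    by_cases hqA : q ∈ A
    · have hq1' : q ∈ X₀.2 := by
        rcases hq1 with ⟨_, h⟩ | ⟨h, _⟩
        · exact absurd hqA h
        · exact h
      have hq2' : q ∈ Y₀.1 := by
        rcases hq2 with ⟨_, h⟩ | ⟨h, _⟩
        · exact absurd hqA h
        · exact h
      have hne3 : Y₀ ≠ X₀ := fun h => hne1 h.symm
      have hne4 : Y₀ ≠ (X₀.2, X₀.1) := by
        intro h
        apply hne2
        rw [h]
      obtain ⟨Z₀, hZ₀, hZ1, hZ2⟩ := M.elimAx Y₀ hY₀ X₀ hX₀ hne3 hne4 q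
        (Finset.mem_inter.2 ⟨hq2', hq1'⟩)
      have hZ1' : Z₀.1 ⊆ (X₀.1 ∪ Y₀.1).erase q := by rwa [Finset.union_comm] at hZ1
      have hZ2' : Z₀.2 ⊆ (X₀.2 ∪ Y₀.2).erase q := by rwa [Finset.union_comm] at hZ2
      obtain ⟨hb1, hb2⟩ := reorient_erase_bound (A := A) hZ1' hZ2'
      exact ⟨reorient A Z₀, ⟨Z₀, hZ₀, rfl⟩, hb1, hb2⟩
    · have hq1' : q ∈ X₀.1 := by
        rcases hq1 with ⟨h, _⟩ | ⟨_, h⟩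
        · exact h
        · exact absurd h hqA
      have hq2' : q ∈ Y₀.2 := by
        rcases hq2 with ⟨h, _⟩ | ⟨_, h⟩
        · exact h
        · exact absurd h hqA
      obtain ⟨Z₀, hZ₀, hZ1, hZ2⟩ := M.elimAx X₀ hX₀ Y₀ hY₀ hne1 hne2 q
        (Finset.mem_inter.2 ⟨hq1', hq2'⟩)
      obtain ⟨hb1, hb2⟩ := reorient_erase_bound (A := A) hZ1 hZ2
      exact ⟨reorient A Z₀, ⟨Z₀, hZ₀, rfl⟩, hb1, hb2⟩

@[simp] lemma reorOM_C (M : OM α) (A : Finset α) : (reorOM M A).C = reorientC A M.C := rfl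

def delOM (M : OM α) (D : Finset α) : OM α where
  C := delC D M.C
  disj := fun X hX => M.disj X hX.1
  not_empty_mem := fun h => M.not_empty_mem h.1
  neg_mem := fun X hX => ⟨M.neg_mem X hX.1, by rw [supp_swap]; exact hX.2⟩
  incomp := fun X hX Y hY h => M.incomp X hX.1 Y hY.1 h
  elimAx := by
    intro X hX Y hY hne hne' q hq
    obtain ⟨Z, hZ, h1, h2⟩ := M.elimAx X hX.1 Y hY.1 hne hne' q hq
    refine ⟨Z, ⟨hZ, ?_⟩, h1, h2⟩
    rw [Finset.disjoint_left]
    intro x hx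
    rcases Finset.mem_union.1 hx with h | h
    · have := h1 h
      rw [Finset.mem_erase, Finset.mem_union] at this
      rcases this.2 with h' | h'
      · exact Finset.disjoint_left.1 hX.2 (Finset.mem_union.2 (Or.inl h'))
      · exact Finset.disjoint_left.1 hY.2 (Finset.mem_union.2 (Or.inl h'))
    · have := h2 h
      rw [Finset.mem_erase, Finset.mem_union] at this
      rcases this.2 with h' | h'
      · exact Finset.disjoint_left.1 hX.2 (Finset.mem_union.2 (Or.inr h'))
      · exact Finset.disjoint_left.1 hY.2 (Finset.mem_union.2 (Or.inr h'))

@[simp] lemma delOM_C (M : OM α) (D : Finset α) : (delOM M D).C = delC D M.C := rfl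

end OMAux

namespace OMAux

variable {α : Type} [DecidableEq α]

/-! ### auto-minimality and single-element conformality -/

lemma sdiff_singleton_self {s : Finset α} {g : α} (h : g ∉ s) : s \ {g} = s := by
  ext x
  simp only [Finset.mem_sdiff, Finset.mem_singleton]
  constructor
  · exact fun hx => hx.1
  · intro hx
    exact ⟨hx, fun hEq => h (hEq ▸ hx)⟩

lemma automin (M : OM α) {Y : Finset α × Finset α} (hY : Y ∈ M.C) {g : α}
    (hg : g ∈ supp Y) (hne : (supp Y \ {g}).Nonempty) :
    res {g} Y ∈ contrC {g} M.C := by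
  constructor
  · exact mem_contrPre.2 ⟨Y, hY, hne, rfl⟩
  · intro W hW hsub
    rcases mem_contrPre.1 hW with ⟨U, hU, hUne, rfl⟩
    rw [supp_res, supp_res] at hsub
    rw [supp_res, supp_res]
    by_cases hgU : g ∈ supp U
    · have hsub' : supp U ⊆ supp Y := by
        intro x hx
        by_cases hxg : x = g
        · exact hxg ▸ hg
        · have : x ∈ supp Y \ {g} := hsub (Finset.mem_sdiff.2 ⟨hx, by simp [hxg]⟩)
          exact (Finset.mem_sdiff.1 this).1
      rcases M.incomp U hU Y hY hsub' with rfl | h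
      · rfl
      · rw [h, supp_swap]
    · have hU' : supp U \ {g} = supp U := sdiff_singleton_self hgU
      have hsub' : supp U ⊆ supp Y := by
        rw [← hU']
        exact hsub.trans Finset.sdiff_subset
      rcases M.incomp U hU Y hY hsub' with rfl | h
      · exact absurd hg hgU
      · rw [h, supp_swap] at hgU
        exact absurd hg hgU

lemma conf_aux (M : OM α) (g : α) {Y : Finset α × Finset α} (hYC : Y ∈ M.C)
    (hgY : g ∉ supp Y) :
    ∀ n (V : Finset α × Finset α), V ∈ M.C → g ∈ supp V → (supp V \ {g}).Nonempty →
      supp V \ {g} ⊆ supp Y → ((V.1 ∩ Y.2) ∪ (V.2 ∩ Y.1)).card ≤ n →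
      ∃ Z ∈ contrC {g} M.C, Z.1 ⊆ Y.1 ∧ Z.2 ⊆ Y.2 := by
  intro n
  induction n with
  | zero =>
    intro V hV hgV hVne hVsub hcard
    have hconf : (V.1 ∩ Y.2) ∪ (V.2 ∩ Y.1) = ∅ := by
      rw [← Finset.card_eq_zero]
      omega
    refine ⟨res {g} V, automin M hV hgV hVne, ?_, ?_⟩
    · intro x hx
      rw [res, Finset.mem_sdiff, Finset.mem_singleton] at hx
      have hxY : x ∈ supp Y := hVsub (Finset.mem_sdiff.2 ⟨Finset.mem_union.2 (Or.inl hx.1), by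
        simp [hx.2]⟩)
      rcases Finset.mem_union.1 hxY with h | h
      · exact h
      · exact absurd (Finset.mem_union.2 (Or.inl (Finset.mem_inter.2 ⟨hx.1, h⟩)))
          (by rw [hconf]; exact Finset.notMem_empty x)
    · intro x hx
      rw [res, Finset.mem_sdiff, Finset.mem_singleton] at hx
      have hxY : x ∈ supp Y := hVsub (Finset.mem_sdiff.2 ⟨Finset.mem_union.2 (Or.inr hx.1), by
        simp [hx.2]⟩)
      rcases Finset.mem_union.1 hxY with h | h
      · exact absurd (Finset.mem_union.2 (Or.inr (Finset.mem_inter.2 ⟨hx.1, h⟩)))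
          (by rw [hconf]; exact Finset.notMem_empty x)
      · exact h
  | succ n ih =>
    intro V hV hgV hVne hVsub hcard
    by_cases hconf : (V.1 ∩ Y.2) ∪ (V.2 ∩ Y.1) = ∅
    · exact ih V hV hgV hVne hVsub (by rw [hconf]; simp)
    · obtain ⟨h, hh⟩ := Finset.nonempty_iff_ne_empty.2 hconf
      have hVY : V ≠ Y := by
        intro hEq
        exact hgY (hEq ▸ hgV)
      have hVY' : V ≠ (Y.2, Y.1) := by
        intro hEq
        rw [hEq, supp_swap] at hgV
        exact hgY hgV
      -- eliminate at h
      have key : ∃ R ∈ M.C, R.1 ⊆ (V.1 ∪ Y.1).erase h ∧ R.2 ⊆ (V.2 ∪ Y.2).erase h := by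
        rcases Finset.mem_union.1 hh with h1 | h1
        · exact M.elimAx V hV Y hYC hVY hVY' h h1
        · rw [Finset.mem_inter] at h1
          have hne1 : Y ≠ V := fun hEq => hVY hEq.symm
          have hne2 : Y ≠ (V.2, V.1) := by
            intro hEq
            apply hVY'
            rw [hEq]
          obtain ⟨R, hR, hR1, hR2⟩ := M.elimAx Y hYC V hV hne1 hne2 h
            (Finset.mem_inter.2 ⟨h1.2, h1.1⟩)
          exact ⟨R, hR, by rwa [Finset.union_comm] at hR1, by rwa [Finset.union_comm] at hR2⟩
      obtain ⟨R, hR, hR1, hR2⟩ := key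
      have hhV : h ∈ supp V := by
        rcases Finset.mem_union.1 hh with h1 | h1
        · exact Finset.mem_union.2 (Or.inl (Finset.mem_inter.1 h1).1)
        · exact Finset.mem_union.2 (Or.inr (Finset.mem_inter.1 h1).1)
      have hhY : h ∈ supp Y := by
        rcases Finset.mem_union.1 hh with h1 | h1
        · exact Finset.mem_union.2 (Or.inr (Finset.mem_inter.1 h1).2)
        · exact Finset.mem_union.2 (Or.inl (Finset.mem_inter.1 h1).2)
      have hsuppR : supp R ⊆ ((supp V ∪ supp Y).erase h) := by
        intro x hx
        rcases Finset.mem_union.1 hx with h2 | h2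
        · have := hR1 h2
          rw [Finset.mem_erase] at this ⊢
          refine ⟨this.1, ?_⟩
          rcases Finset.mem_union.1 this.2 with h3 | h3
          · exact Finset.mem_union.2 (Or.inl (Finset.mem_union.2 (Or.inl h3)))
          · exact Finset.mem_union.2 (Or.inr (Finset.mem_union.2 (Or.inl h3)))
        · have := hR2 h2
          rw [Finset.mem_erase] at this ⊢
          refine ⟨this.1, ?_⟩
          rcases Finset.mem_union.1 this.2 with h3 | h3
          · exact Finset.mem_union.2 (Or.inl (Finset.mem_union.2 (Or.inr h3)))
          · exact Finset.mem_union.2 (Or.inr (Finset.mem_union.2 (Or.inr h3)))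
      have hgR : g ∈ supp R := by
        by_contra hgR
        have hsub' : supp R ⊆ supp Y := by
          intro x hx
          have hx' := hsuppR hx
          rw [Finset.mem_erase] at hx'
          rcases Finset.mem_union.1 hx'.2 with h3 | h3
          · have : x ∈ supp V \ {g} := Finset.mem_sdiff.2 ⟨h3, by
              simp only [Finset.mem_singleton]
              intro hEq
              exact hgR (hEq ▸ hx)⟩
            exact hVsub this
          · exact h3
        rcases M.incomp R hR Y hYC hsub' with rfl | hEq
        · have : h ∈ supp R := hhY
          have := (Finset.mem_erase.1 (hsuppR this)).1
          exact this rfl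
        · have hsY : supp R = supp Y := by rw [hEq, supp_swap]
          have : h ∈ supp R := hsY ▸ hhY
          exact (Finset.mem_erase.1 (hsuppR this)).1 rfl
      have hRne : (supp R \ {g}).Nonempty := by
        by_contra hcon
        rw [Finset.not_nonempty_iff_eq_empty, Finset.sdiff_eq_empty_iff_subset] at hcon
        have hRg : supp R = {g} := Finset.Subset.antisymm hcon (Finset.singleton_subset_iff.2 hgR)
        have hsub' : supp R ⊆ supp V := by rw [hRg]; exact Finset.singleton_subset_iff.2 hgV
        rcases M.incomp R hR V hV hsub' with rfl | hEq
        · rw [hRg] at hVne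
          simp at hVne
        · have hsV : supp V = {g} := by
            rw [← supp_swap V, ← hEq]
            exact hRg
          rw [hsV] at hVne
          simp at hVne
      have hRsub : supp R \ {g} ⊆ supp Y := by
        intro x hx
        rw [Finset.mem_sdiff, Finset.mem_singleton] at hx
        have hx' := hsuppR hx.1
        rw [Finset.mem_erase] at hx'
        rcases Finset.mem_union.1 hx'.2 with h3 | h3
        · exact hVsub (Finset.mem_sdiff.2 ⟨h3, by simp [hx.2]⟩)
        · exact h3
      have hconfR : (R.1 ∩ Y.2) ∪ (R.2 ∩ Y.1) ⊆ ((V.1 ∩ Y.2) ∪ (V.2 ∩ Y.1)).erase h := by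
        intro x hx
        have hYdisj := M.disj Y hYC
        rcases Finset.mem_union.1 hx with h2 | h2
        · rw [Finset.mem_inter] at h2
          have := hR1 h2.1
          rw [Finset.mem_erase] at this
          rw [Finset.mem_erase]
          refine ⟨this.1, ?_⟩
          rcases Finset.mem_union.1 this.2 with h3 | h3
          · exact Finset.mem_union.2 (Or.inl (Finset.mem_inter.2 ⟨h3, h2.2⟩))
          · exact absurd h2.2 (Finset.disjoint_left.1 hYdisj h3)
        · rw [Finset.mem_inter] at h2
          have := hR2 h2.1
          rw [Finset.mem_erase] at this
          rw [Finset.mem_erase]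
          refine ⟨this.1, ?_⟩
          rcases Finset.mem_union.1 this.2 with h3 | h3
          · exact Finset.mem_union.2 (Or.inr (Finset.mem_inter.2 ⟨h3, h2.2⟩))
          · exact absurd h3 (Finset.disjoint_left.1 hYdisj h2.2)
      have hcard' : ((R.1 ∩ Y.2) ∪ (R.2 ∩ Y.1)).card ≤ n := by
        have h1 : (((V.1 ∩ Y.2) ∪ (V.2 ∩ Y.1)).erase h).card
            = ((V.1 ∩ Y.2) ∪ (V.2 ∩ Y.1)).card - 1 := Finset.card_erase_of_mem hh
        have h2 := Finset.card_le_card hconfR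
        have h3 : 1 ≤ ((V.1 ∩ Y.2) ∪ (V.2 ∩ Y.1)).card := Finset.card_pos.2 ⟨h, hh⟩
        omega
      exact ih R hR hgR hRne hRsub hcard'

lemma conf_single (M : OM α) (g : α) {Y : Finset α × Finset α} (hY : Y ∈ M.C)
    (hne : (supp Y \ {g}).Nonempty) :
    ∃ Z ∈ contrC {g} M.C, Z.1 ⊆ Y.1 \ {g} ∧ Z.2 ⊆ Y.2 \ {g} := by
  by_cases hg : g ∈ supp Y
  · exact ⟨res {g} Y, automin M hY hg hne, Finset.Subset.refl _, Finset.Subset.refl _⟩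
  · have hY1 : Y.1 \ {g} = Y.1 :=
      sdiff_singleton_self (fun hgy => hg (Finset.mem_union.2 (Or.inl hgy)))
    have hY2 : Y.2 \ {g} = Y.2 :=
      sdiff_singleton_self (fun hgy => hg (Finset.mem_union.2 (Or.inr hgy)))
    have hresY : res {g} Y = Y := by
      rw [res, hY1, hY2]
    have hYpre : Y ∈ contrPre {g} M.C := mem_contrPre.2 ⟨Y, hY, hne, hresY.symm⟩
    by_cases hmin : ∀ W ∈ contrPre {g} M.C, supp W ⊆ supp Y → supp W = supp Y
    · exact ⟨Y, ⟨hYpre, hmin⟩, by rw [hY1], by rw [hY2]⟩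
    · push_neg at hmin
      obtain ⟨W, hW, hWsub, hWne⟩ := hmin
      rcases mem_contrPre.1 hW with ⟨V, hV, hVne, rfl⟩
      rw [supp_res] at hWsub hWne
      have hgV : g ∈ supp V := by
        by_contra hgV
        have hVg : supp V \ {g} = supp V := sdiff_singleton_self hgV
        rw [hVg] at hWsub hWne
        rcases M.incomp V hV Y hY hWsub with rfl | hEq
        · exact hWne rfl
        · rw [hEq, supp_swap] at hWne
          exact hWne rfl
      obtain ⟨Z, hZ, h1, h2⟩ := conf_aux M g hY hg _ V hV hgV hVne hWsub (le_refl _)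
      exact ⟨Z, hZ, by rw [hY1]; exact h1, by rw [hY2]; exact h2⟩

end OMAux

namespace OMAux

variable {α : Type} [DecidableEq α]

/-! ### single-element contraction is an OM -/

def contr1OM (M : OM α) (g : α) : OM α where
  C := contrC {g} M.C
  disj := by
    rintro Z ⟨hpre, _⟩
    rcases mem_contrPre.1 hpre with ⟨Y, hY, _, rfl⟩
    have := M.disj Y hY
    rw [Finset.disjoint_left] at this ⊢
    intro x hx1 hx2
    rw [res, Finset.mem_sdiff] at hx1 hx2
    exact this hx1.1 hx2.1
  not_empty_mem := by
    intro h
    have := supp_nonempty_of_mem_contrPre h.1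
    simp [supp] at this
  neg_mem := by
    rintro Z ⟨hpre, hmin⟩
    rcases mem_contrPre.1 hpre with ⟨Y, hY, hne, rfl⟩
    constructor
    · refine mem_contrPre.2 ⟨(Y.2, Y.1), M.neg_mem Y hY, by rwa [supp_swap], ?_⟩
      rw [res_swap]
    · intro W hW hsub
      rw [← res_swap, supp_res, supp_swap, ← supp_res] at hsub ⊢
      exact hmin W hW hsub
  incomp := by
    rintro Z₁ ⟨hpre₁, hmin₁⟩ Z₂ ⟨hpre₂, hmin₂⟩ hsub
    have hEqS' : supp Z₁ = supp Z₂ := hmin₂ Z₁ hpre₁ hsub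
    rcases mem_contrPre.1 hpre₁ with ⟨X, hX, hXne, rfl⟩
    rcases mem_contrPre.1 hpre₂ with ⟨Y, hY, hYne, rfl⟩
    have hEqS : supp X \ {g} = supp Y \ {g} := by
      rw [supp_res, supp_res] at hEqS'
      exact hEqS'
    by_cases hgX : g ∈ supp X <;> by_cases hgY : g ∈ supp Y
    · have hEq : supp X = supp Y := by
        have e1 : insert g ((supp X).erase g) = supp X := Finset.insert_erase hgX
        have e2 : insert g ((supp Y).erase g) = supp Y := Finset.insert_erase hgY
        rw [← e1, ← e2, Finset.erase_eq, Finset.erase_eq, hEqS]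
      rcases M.incomp X hX Y hY (le_of_eq hEq) with rfl | hswap
      · exact Or.inl rfl
      · right
        rw [hswap, res_swap]
    · exfalso
      have hsub' : supp Y ⊆ supp X := by
        have : supp Y = supp Y \ {g} := (sdiff_singleton_self hgY).symm
        rw [this, ← hEqS]
        exact Finset.sdiff_subset
      rcases M.incomp Y hY X hX hsub' with rfl | hswap
      · exact hgY hgX
      · rw [hswap, supp_swap] at hgY
        exact hgY hgX
    · exfalso
      have hsub' : supp X ⊆ supp Y := by
        have : supp X = supp X \ {g} := (sdiff_singleton_self hgX).symm
        rw [this, hEqS]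
        exact Finset.sdiff_subset
      rcases M.incomp X hX Y hY hsub' with rfl | hswap
      · exact hgX hgY
      · rw [hswap, supp_swap] at hgX
        exact hgX hgY
    · have hEq : supp X = supp Y := by
        rw [← sdiff_singleton_self hgX, ← sdiff_singleton_self hgY]
        exact hEqS
      rcases M.incomp X hX Y hY (le_of_eq hEq) with rfl | hswap
      · exact Or.inl rfl
      · right
        rw [hswap, res_swap]
  elimAx := by
    rintro Z₁ hZ₁ Z₂ hZ₂ hne hne' q hq
    obtain ⟨hpre₁, hmin₁⟩ := hZ₁
    obtain ⟨hpre₂, hmin₂⟩ := hZ₂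
    rcases mem_contrPre.1 hpre₁ with ⟨X, hX, hXne, rfl⟩
    rcases mem_contrPre.1 hpre₂ with ⟨Y, hY, hYne, rfl⟩
    rw [Finset.mem_inter] at hq
    have hq1 : q ∈ X.1 := (Finset.mem_sdiff.1 hq.1).1
    have hq2 : q ∈ Y.2 := (Finset.mem_sdiff.1 hq.2).1
    have hqg : q ≠ g := by
      have := (Finset.mem_sdiff.1 hq.1).2
      simpa using this
    have hneXY : X ≠ Y := fun h => hne (by rw [h])
    have hneXY' : X ≠ (Y.2, Y.1) := fun h => hne' (by rw [h, res_swap])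
    obtain ⟨Z, hZ, hb1, hb2⟩ := M.elimAx X hX Y hY hneXY hneXY' q
      (Finset.mem_inter.2 ⟨hq1, hq2⟩)
    have hZne : (supp Z \ {g}).Nonempty := by
      by_contra hcon
      rw [Finset.not_nonempty_iff_eq_empty, Finset.sdiff_eq_empty_iff_subset] at hcon
      have hZg : supp Z = {g} := by
        refine Finset.Subset.antisymm hcon ?_
        rw [Finset.singleton_subset_iff]
        rcases OM.supp_nonempty M hZ with ⟨x, hx⟩
        have := hcon hx
        rw [Finset.mem_singleton] at this
        exact this ▸ hx
      have hgXY : g ∈ supp X ∪ supp Y := by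
        have : g ∈ supp Z := by rw [hZg]; exact Finset.mem_singleton_self g
        rcases Finset.mem_union.1 this with h2 | h2
        · have := hb1 h2
          rw [Finset.mem_erase, Finset.mem_union] at this
          rcases this.2 with h3 | h3
          · exact Finset.mem_union.2 (Or.inl (Finset.mem_union.2 (Or.inl h3)))
          · exact Finset.mem_union.2 (Or.inr (Finset.mem_union.2 (Or.inl h3)))
        · have := hb2 h2
          rw [Finset.mem_erase, Finset.mem_union] at this
          rcases this.2 with h3 | h3
          · exact Finset.mem_union.2 (Or.inl (Finset.mem_union.2 (Or.inr h3)))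
          · exact Finset.mem_union.2 (Or.inr (Finset.mem_union.2 (Or.inr h3)))
      rcases Finset.mem_union.1 hgXY with h2 | h2
      · have hsub' : supp Z ⊆ supp X := by rw [hZg]; exact Finset.singleton_subset_iff.2 h2
        have : supp X = {g} := by
          rcases M.incomp Z hZ X hX hsub' with rfl | hswap
          · exact hZg
          · rw [← supp_swap X, ← hswap]
            exact hZg
        rw [this] at hXne
        simp at hXne
      · have hsub' : supp Z ⊆ supp Y := by rw [hZg]; exact Finset.singleton_subset_iff.2 h2
        have : supp Y = {g} := by
          rcases M.incomp Z hZ Y hY hsub' with rfl | hswap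
          · exact hZg
          · rw [← supp_swap Y, ← hswap]
            exact hZg
        rw [this] at hYne
        simp at hYne
    obtain ⟨Z', hZ', hc1, hc2⟩ := conf_single M g hZ hZne
    refine ⟨Z', hZ', ?_, ?_⟩
    · intro x hx
      have hxZ := hc1 hx
      rw [Finset.mem_sdiff, Finset.mem_singleton] at hxZ
      have := hb1 hxZ.1
      rw [Finset.mem_erase] at this
      rw [Finset.mem_erase, Finset.mem_union]
      refine ⟨this.1, ?_⟩
      rcases Finset.mem_union.1 this.2 with h3 | h3
      · exact Or.inl (Finset.mem_sdiff.2 ⟨h3, by simp [hxZ.2]⟩)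
      · exact Or.inr (Finset.mem_sdiff.2 ⟨h3, by simp [hxZ.2]⟩)
    · intro x hx
      have hxZ := hc2 hx
      rw [Finset.mem_sdiff, Finset.mem_singleton] at hxZ
      have := hb2 hxZ.1
      rw [Finset.mem_erase] at this
      rw [Finset.mem_erase, Finset.mem_union]
      refine ⟨this.1, ?_⟩
      rcases Finset.mem_union.1 this.2 with h3 | h3
      · exact Or.inl (Finset.mem_sdiff.2 ⟨h3, by simp [hxZ.2]⟩)
      · exact Or.inr (Finset.mem_sdiff.2 ⟨h3, by simp [hxZ.2]⟩)

@[simp] lemma contr1OM_C (M : OM α) (g : α) : (contr1OM M g).C = contrC {g} M.C := rfl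

end OMAux

namespace OMAux

variable {α : Type} [DecidableEq α]

/-! ### unsigned layer -/

/-- `S` is a minimal nonempty restriction `supp X \ T` over circuits. -/
def MinT (C : Set (Finset α × Finset α)) (T : Finset α) (S : Finset α) : Prop :=
  S.Nonempty ∧ (∃ X ∈ C, supp X \ T = S) ∧
    ∀ X ∈ C, (supp X \ T).Nonempty → supp X \ T ⊆ S → supp X \ T = S

lemma mem_contrC_iff {C : Set (Finset α × Finset α)} {T : Finset α}
    {Z : Finset α × Finset α} :
    Z ∈ contrC T C ↔ Z ∈ contrPre T C ∧ MinT C T (supp Z) := by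
  constructor
  · rintro ⟨hpre, hmin⟩
    refine ⟨hpre, supp_nonempty_of_mem_contrPre hpre, ?_, ?_⟩
    · rcases mem_contrPre.1 hpre with ⟨Y, hY, hne, rfl⟩
      exact ⟨Y, hY, (supp_res _ _).symm⟩
    · intro X hX hne hsub
      have hX' : res T X ∈ contrPre T C := mem_contrPre.2 ⟨X, hX, hne, rfl⟩
      have := hmin _ hX' (by rwa [supp_res])
      rwa [supp_res] at this
  · rintro ⟨hpre, _, _, hminT⟩
    refine ⟨hpre, ?_⟩
    intro W hW hsub
    rcases mem_contrPre.1 hW with ⟨U, hU, hUne, rfl⟩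
    rw [supp_res] at hsub ⊢
    exact hminT U hU hUne hsub

lemma minT_exists_mem {M : OM α} {g : α} {S : Finset α} (h : MinT M.C {g} S) :
    ∃ Z ∈ contrC {g} M.C, supp Z = S := by
  obtain ⟨hne, ⟨X, hX, hXS⟩, hmin⟩ := h
  refine ⟨res {g} X, ?_, by rw [supp_res, hXS]⟩
  rw [mem_contrC_iff]
  have hpre : res {g} X ∈ contrPre {g} M.C := mem_contrPre.2 ⟨X, hX, by rw [hXS]; exact hne, rfl⟩
  refine ⟨hpre, ?_⟩
  rw [supp_res, hXS]
  exact ⟨hne, ⟨X, hX, hXS⟩, hmin⟩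

lemma supp_subset_of_bounds {Z : Finset α × Finset α} {A1 A2 B1 B2 : Finset α} {q : α}
    (h1 : Z.1 ⊆ (A1 ∪ B1).erase q) (h2 : Z.2 ⊆ (A2 ∪ B2).erase q) :
    supp Z ⊆ ((A1 ∪ A2) ∪ (B1 ∪ B2)).erase q := by
  intro x hx
  rw [Finset.mem_erase, Finset.mem_union, Finset.mem_union, Finset.mem_union]
  rcases Finset.mem_union.1 hx with h | h
  · have := h1 h
    rw [Finset.mem_erase, Finset.mem_union] at this
    exact ⟨this.1, this.2.imp (fun h' => Or.inl h') (fun h' => Or.inl h')⟩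
  · have := h2 h
    rw [Finset.mem_erase, Finset.mem_union] at this
    exact ⟨this.1, this.2.imp (fun h' => Or.inr h') (fun h' => Or.inr h')⟩

lemma uelim (M : OM α) {X Y : Finset α × Finset α} (hX : X ∈ M.C) (hY : Y ∈ M.C)
    (hs : supp X ≠ supp Y) {q : α} (hq1 : q ∈ supp X) (hq2 : q ∈ supp Y) :
    ∃ Z ∈ M.C, supp Z ⊆ (supp X ∪ supp Y).erase q := by
  have hXY : X ≠ Y := fun h => hs (by rw [h])
  have hXY' : X ≠ (Y.2, Y.1) := fun h => hs (by rw [h, supp_swap])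
  have hswapX : (X.2, X.1) ∈ M.C := M.neg_mem X hX
  have hswapY : (Y.2, Y.1) ∈ M.C := M.neg_mem Y hY
  rcases Finset.mem_union.1 hq1 with h1 | h1 <;> rcases Finset.mem_union.1 hq2 with h2 | h2
  · -- q ∈ X.1, q ∈ Y.1 : eliminate X with swap Y
    have hne1 : X ≠ (Y.2, Y.1) := hXY'
    have hne2 : X ≠ ((Y.2, Y.1).2, (Y.2, Y.1).1) := hXY
    obtain ⟨Z, hZ, hb1, hb2⟩ := M.elimAx X hX (Y.2, Y.1) hswapY hne1 hne2 q
      (Finset.mem_inter.2 ⟨h1, h2⟩)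
    refine ⟨Z, hZ, ?_⟩
    have hb := supp_subset_of_bounds hb1 hb2
    have h' : (X.1 ∪ X.2) ∪ (Y.2 ∪ Y.1) = supp X ∪ supp Y := by
      rw [Finset.union_comm Y.2 Y.1]
      rfl
    rwa [h'] at hb
  · obtain ⟨Z, hZ, hb1, hb2⟩ := M.elimAx X hX Y hY hXY hXY' q (Finset.mem_inter.2 ⟨h1, h2⟩)
    exact ⟨Z, hZ, supp_subset_of_bounds hb1 hb2⟩
  · -- q ∈ X.2, q ∈ Y.1 : eliminate Y with X
    have hne1 : Y ≠ X := fun h => hXY h.symm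
    have hne2 : Y ≠ (X.2, X.1) := by
      intro h
      apply hXY'
      rw [h]
    obtain ⟨Z, hZ, hb1, hb2⟩ := M.elimAx Y hY X hX hne1 hne2 q (Finset.mem_inter.2 ⟨h2, h1⟩)
    refine ⟨Z, hZ, ?_⟩
    have hb := supp_subset_of_bounds hb1 hb2
    have h' : (Y.1 ∪ Y.2) ∪ (X.1 ∪ X.2) = supp X ∪ supp Y := by
      rw [Finset.union_comm (Y.1 ∪ Y.2) (X.1 ∪ X.2)]
      rfl
    rwa [h'] at hb
  · -- q ∈ X.2, q ∈ Y.2 : eliminate swap X with Y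
    have hne1 : (X.2, X.1) ≠ Y := by
      intro h
      apply hXY'
      rw [← h]
    have hne2 : (X.2, X.1) ≠ (Y.2, Y.1) := by
      intro h
      apply hXY
      have h1' := congrArg Prod.fst h
      have h2' := congrArg Prod.snd h
      simp only [Prod.fst, Prod.snd] at h1' h2'
      exact Prod.ext h2' h1'
    obtain ⟨Z, hZ, hb1, hb2⟩ := M.elimAx (X.2, X.1) hswapX Y hY hne1 hne2 q
      (Finset.mem_inter.2 ⟨h1, h2⟩)
    refine ⟨Z, hZ, ?_⟩
    have hb := supp_subset_of_bounds hb1 hb2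
    have h' : (X.2 ∪ X.1) ∪ (Y.1 ∪ Y.2) = supp X ∪ supp Y := by
      rw [Finset.union_comm X.2 X.1]
      rfl
    rwa [h'] at hb

lemma ustrong (M : OM α) :
    ∀ n (X Y : Finset α × Finset α), X ∈ M.C → Y ∈ M.C → supp X ≠ supp Y →
      ∀ x, x ∈ supp X → x ∈ supp Y → ∀ y, y ∈ supp X → y ∉ supp Y →
      (supp X ∪ supp Y).card ≤ n →
      ∃ Z ∈ M.C, y ∈ supp Z ∧ supp Z ⊆ (supp X ∪ supp Y).erase x := by
  intro n
  induction n with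
  | zero =>
    intro X Y hX hY hs x hx1 hx2 y hy1 hy2 hcard
    exfalso
    have : x ∈ supp X ∪ supp Y := Finset.mem_union.2 (Or.inl hx1)
    have := Finset.card_pos.2 ⟨x, this⟩
    omega
  | succ n ih =>
    intro X Y hX hY hs x hx1 hx2 y hy1 hy2 hcard
    obtain ⟨Z₃, hZ₃, hb₃⟩ := uelim M hX hY hs hx1 hx2
    by_cases hy3 : y ∈ supp Z₃
    · exact ⟨Z₃, hZ₃, hy3, hb₃⟩
    · have hz : ∃ z, z ∈ supp Z₃ ∧ z ∉ supp X := by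
        by_contra hcon
        push_neg at hcon
        have hsub : supp Z₃ ⊆ supp X := hcon
        rcases M.incomp Z₃ hZ₃ X hX hsub with rfl | hswap
        · exact (Finset.mem_erase.1 (hb₃ hx1)).1 rfl
        · have : supp Z₃ = supp X := by rw [hswap, supp_swap]
          have hxZ : x ∈ supp Z₃ := this ▸ hx1
          exact (Finset.mem_erase.1 (hb₃ hxZ)).1 rfl
      obtain ⟨z, hzZ, hzX⟩ := hz
      have hzY : z ∈ supp Y := by
        have := hb₃ hzZ
        rw [Finset.mem_erase, Finset.mem_union] at this
        rcases this.2 with h | h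
        · exact absurd h hzX
        · exact h
      have hxZ₃ : x ∉ supp Z₃ := fun h => (Finset.mem_erase.1 (hb₃ h)).1 rfl
      have hsYZ : supp Y ≠ supp Z₃ := fun h => hxZ₃ (h ▸ hx2)
      have hcard1 : (supp Y ∪ supp Z₃).card ≤ n := by
        have hsub : supp Y ∪ supp Z₃ ⊆ (supp X ∪ supp Y).erase y := by
          intro w hw
          rw [Finset.mem_erase]
          rcases Finset.mem_union.1 hw with h | h
          · exact ⟨fun hEq => hy2 (hEq ▸ h), Finset.mem_union.2 (Or.inr h)⟩
          · have := hb₃ h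
            rw [Finset.mem_erase] at this
            exact ⟨fun hEq => hy3 (hEq ▸ h), this.2⟩
        have h1 := Finset.card_le_card hsub
        have h2 : ((supp X ∪ supp Y).erase y).card = (supp X ∪ supp Y).card - 1 :=
          Finset.card_erase_of_mem (Finset.mem_union.2 (Or.inl hy1))
        omega
      obtain ⟨Z₄, hZ₄, hxZ₄, hb₄⟩ := ih Y Z₃ hY hZ₃ hsYZ z hzY hzZ x hx2 hxZ₃ hcard1
      have hyZ₄ : y ∉ supp Z₄ := by
        intro h
        have := hb₄ h
        rw [Finset.mem_erase, Finset.mem_union] at this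
        rcases this.2 with h' | h'
        · exact hy2 h'
        · exact hy3 h'
      have hsXZ₄ : supp X ≠ supp Z₄ := fun h => hyZ₄ (h ▸ hy1)
      have hzZ₄ : z ∉ supp Z₄ := fun h => (Finset.mem_erase.1 (hb₄ h)).1 rfl
      have hcard2 : (supp X ∪ supp Z₄).card ≤ n := by
        have hsub : supp X ∪ supp Z₄ ⊆ (supp X ∪ supp Y).erase z := by
          intro w hw
          rw [Finset.mem_erase]
          rcases Finset.mem_union.1 hw with h | h
          · exact ⟨fun hEq => hzX (hEq ▸ h), Finset.mem_union.2 (Or.inl h)⟩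
          · have := hb₄ h
            rw [Finset.mem_erase, Finset.mem_union] at this
            refine ⟨fun hEq => hzZ₄ (hEq ▸ h), ?_⟩
            rcases this.2 with h' | h'
            · exact Finset.mem_union.2 (Or.inr h')
            · have := hb₃ h'
              rw [Finset.mem_erase] at this
              exact this.2
        have h1 := Finset.card_le_card hsub
        have h2 : ((supp X ∪ supp Y).erase z).card = (supp X ∪ supp Y).card - 1 :=
          Finset.card_erase_of_mem (Finset.mem_union.2 (Or.inr hzY))
        omega
      obtain ⟨Z₅, hZ₅, hyZ₅, hb₅⟩ := ih X Z₄ hX hZ₄ hsXZ₄ x hx1 hxZ₄ y hy1 hyZ₄ hcard2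
      refine ⟨Z₅, hZ₅, hyZ₅, ?_⟩
      intro w hw
      have := hb₅ hw
      rw [Finset.mem_erase, Finset.mem_union] at this
      rw [Finset.mem_erase]
      refine ⟨this.1, ?_⟩
      rcases this.2 with h | h
      · exact Finset.mem_union.2 (Or.inl h)
      · have := hb₄ h
        rw [Finset.mem_erase, Finset.mem_union] at this
        rcases this.2 with h' | h'
        · exact Finset.mem_union.2 (Or.inr h')
        · have := hb₃ h'
          rw [Finset.mem_erase] at this
          exact this.2
end OMAux

namespace OMAux

variable {α : Type} [DecidableEq α]

lemma sdiff_insert' (s T : Finset α) (g : α) :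
    s \ insert g T = (s \ {g}) \ T := by
  ext x
  simp only [Finset.mem_sdiff, Finset.mem_insert, Finset.mem_singleton]
  tauto

lemma uthrough (M : OM α) (g : α) :
    ∀ n (X : Finset α × Finset α), X ∈ M.C → ∀ p, p ∈ supp X → p ≠ g →
      (supp X \ {g}).card ≤ n →
      ∃ S, MinT M.C {g} S ∧ p ∈ S ∧ S ⊆ supp X \ {g} := by
  intro n
  induction n with
  | zero =>
    intro X hX p hp hpg hcard
    exfalso
    have hmem : p ∈ supp X \ {g} := Finset.mem_sdiff.2 ⟨hp, by simp [hpg]⟩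
    have := Finset.card_pos.2 ⟨p, hmem⟩
    omega
  | succ n ih =>
    intro X hX p hp hpg hcard
    have hpmem : p ∈ supp X \ {g} := Finset.mem_sdiff.2 ⟨hp, by simp [hpg]⟩
    by_cases hmin : ∀ U ∈ M.C, (supp U \ {g}).Nonempty → supp U \ {g} ⊆ supp X \ {g} →
        supp U \ {g} = supp X \ {g}
    · exact ⟨supp X \ {g}, ⟨⟨p, hpmem⟩, ⟨X, hX, rfl⟩, hmin⟩, hpmem, Finset.Subset.refl _⟩
    · push_neg at hmin
      obtain ⟨X', hX', hne', hsub', hneq'⟩ := hmin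
      have hgX' : g ∈ supp X' := by
        by_contra hgX'
        have heq : supp X' \ {g} = supp X' := sdiff_singleton_self hgX'
        have hsub2 : supp X' ⊆ supp X := by
          rw [← heq]
          exact hsub'.trans Finset.sdiff_subset
        rcases M.incomp X' hX' X hX hsub2 with rfl | hswap
        · exact hneq' rfl
        · rw [hswap, supp_swap] at hneq'
          exact hneq' rfl
      by_cases hpX' : p ∈ supp X'
      · have hpS : p ∈ supp X' \ {g} := Finset.mem_sdiff.2 ⟨hpX', by simp [hpg]⟩
        refine ⟨supp X' \ {g}, ⟨⟨p, hpS⟩, ⟨X', hX', rfl⟩, ?_⟩, hpS, hsub'⟩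
        intro U hU hUne hUsub
        by_cases hgU : g ∈ supp U
        · have hsub2 : supp U ⊆ supp X' := by
            intro x hx
            by_cases hxg : x = g
            · exact hxg ▸ hgX'
            · have : x ∈ supp U \ {g} := Finset.mem_sdiff.2 ⟨hx, by simp [hxg]⟩
              exact Finset.sdiff_subset (hUsub this)
          rcases M.incomp U hU X' hX' hsub2 with rfl | hswap
          · rfl
          · rw [hswap, supp_swap]
        · have heq : supp U \ {g} = supp U := sdiff_singleton_self hgU
          have hsub2 : supp U ⊆ supp X' := by
            rw [← heq]
            exact hUsub.trans Finset.sdiff_subset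
          rcases M.incomp U hU X' hX' hsub2 with rfl | hswap
          · exact absurd hgX' hgU
          · rw [hswap, supp_swap] at hgU
            exact absurd hgX' hgU
      · obtain ⟨x, hx⟩ := hne'
        have hxX : x ∈ supp X := Finset.sdiff_subset (hsub' hx)
        have hxX' : x ∈ supp X' := (Finset.mem_sdiff.1 hx).1
        have hsXX' : supp X ≠ supp X' := by
          intro hEq
          exact hneq' (by rw [hEq])
        have hpX'' : p ∉ supp X' := hpX'
        obtain ⟨Z₅, hZ₅, hpZ₅, hb₅⟩ := ustrong M ((supp X ∪ supp X').card) X X' hX hX'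
          hsXX' x hxX hxX' p hp hpX'' (le_refl _)
        have hZsub : supp Z₅ \ {g} ⊆ (supp X \ {g}).erase x := by
          intro w hw
          rw [Finset.mem_sdiff, Finset.mem_singleton] at hw
          have := hb₅ hw.1
          rw [Finset.mem_erase, Finset.mem_union] at this
          rw [Finset.mem_erase, Finset.mem_sdiff, Finset.mem_singleton]
          refine ⟨this.1, ?_, hw.2⟩
          rcases this.2 with h | h
          · exact h
          · have := hsub' (Finset.mem_sdiff.2 ⟨h, by simp [hw.2]⟩)
            exact (Finset.mem_sdiff.1 this).1
        have hcard' : (supp Z₅ \ {g}).card ≤ n := by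
          have h1 := Finset.card_le_card hZsub
          have h2 : ((supp X \ {g}).erase x).card = (supp X \ {g}).card - 1 :=
            Finset.card_erase_of_mem (hsub' hx)
          have h3 : 1 ≤ (supp X \ {g}).card := Finset.card_pos.2 ⟨x, hsub' hx⟩
          omega
        obtain ⟨S, hS, hpS, hSsub⟩ := ih Z₅ hZ₅ p hpZ₅ hpg hcard'
        exact ⟨S, hS, hpS, hSsub.trans (hZsub.trans (Finset.erase_subset _ _))⟩

lemma minT_step (M : OM α) {g : α} {T : Finset α} {S : Finset α}
    (h : MinT (contrC {g} M.C) T S) : MinT M.C (insert g T) S := by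
  obtain ⟨hne, ⟨Xt, hXt, hXtS⟩, hmin⟩ := h
  have hwit : ∃ X ∈ M.C, supp X \ insert g T = S := by
    rcases mem_contrPre.1 hXt.1 with ⟨X, hX, hXne, rfl⟩
    refine ⟨X, hX, ?_⟩
    rw [sdiff_insert', ← supp_res]
    exact hXtS
  refine ⟨hne, hwit, ?_⟩
  intro U hU hUne hUsub
  obtain ⟨p, hpU⟩ := hUne
  rw [Finset.mem_sdiff, Finset.mem_insert] at hpU
  push_neg at hpU
  have hpU1 := hpU.1
  have hpg := hpU.2.1
  have hpT := hpU.2.2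
  obtain ⟨SU, hSU, hpSU, hSUsub⟩ := uthrough M g ((supp U \ {g}).card) U hU p hpU1 hpg (le_refl _)
  obtain ⟨Ut, hUt, hUtS⟩ := minT_exists_mem hSU
  have hUtT : (supp Ut \ T).Nonempty := ⟨p, Finset.mem_sdiff.2 ⟨hUtS ▸ hpSU, hpT⟩⟩
  have hUtsub : supp Ut \ T ⊆ S := by
    intro w hw
    rw [Finset.mem_sdiff] at hw
    have hw1 : w ∈ supp U \ {g} := hSUsub (hUtS ▸ hw.1)
    rw [Finset.mem_sdiff, Finset.mem_singleton] at hw1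
    refine hUsub (Finset.mem_sdiff.2 ⟨hw1.1, ?_⟩)
    rw [Finset.mem_insert]
    push_neg
    exact ⟨hw1.2, hw.2⟩
  have := hmin Ut hUt hUtT hUtsub
  refine Finset.Subset.antisymm hUsub ?_
  rw [← this]
  intro w hw
  rw [Finset.mem_sdiff] at hw ⊢
  have hw1 : w ∈ supp U \ {g} := hSUsub (hUtS ▸ hw.1)
  rw [Finset.mem_sdiff, Finset.mem_singleton] at hw1
  refine ⟨hw1.1, ?_⟩
  rw [Finset.mem_insert]
  push_neg
  exact ⟨hw1.2, hw.2⟩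

lemma contrC_step (M : OM α) {g : α} {T : Finset α}
    {Z : Finset α × Finset α} (hZ : Z ∈ contrC T (contrC {g} M.C)) :
    Z ∈ contrC (insert g T) M.C := by
  rw [mem_contrC_iff] at hZ ⊢
  obtain ⟨hpre, hminT⟩ := hZ
  constructor
  · rcases mem_contrPre.1 hpre with ⟨Xt, hXt, hXtne, rfl⟩
    rcases mem_contrPre.1 hXt.1 with ⟨X, hX, hXne, rfl⟩
    refine mem_contrPre.2 ⟨X, hX, ?_, ?_⟩
    · rw [sdiff_insert']
      rwa [supp_res] at hXtne
    · rw [res_res, Finset.insert_eq]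
  · exact minT_step M hminT

theorem posPart :
    ∀ (n : ℕ) (M : OM α) (N : Finset α), N.card ≤ n →
      ∀ Y ∈ M.C, Y.2 ⊆ N → (supp Y \ N).Nonempty →
      ∃ Z ∈ contrC N M.C, Z.2 = ∅ := by
  intro n
  induction n with
  | zero =>
    intro M N hcard Y hY hY2 hne
    have hN : N = ∅ := Finset.card_eq_zero.1 (by omega)
    subst hN
    rw [contrC_empty]
    exact ⟨Y, hY, Finset.subset_empty.1 hY2⟩
  | succ n ih =>
    intro M N hcard Y hY hY2 hne
    rcases Finset.eq_empty_or_nonempty N with rfl | hNne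
    · rw [contrC_empty]
      exact ⟨Y, hY, Finset.subset_empty.1 hY2⟩
    · by_cases hgY : ∃ g ∈ N, g ∈ supp Y
      · obtain ⟨g, hgN, hgsY⟩ := hgY
        have hYg : (supp Y \ {g}).Nonempty := by
          obtain ⟨x, hx⟩ := hne
          rw [Finset.mem_sdiff] at hx
          exact ⟨x, Finset.mem_sdiff.2 ⟨hx.1, by
            simp only [Finset.mem_singleton]
            intro hEq
            exact hx.2 (hEq ▸ hgN)⟩⟩
        have hY' : res {g} Y ∈ (contr1OM M g).C := automin M hY hgsY hYg
        have hcard' : (N.erase g).card ≤ n := by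
          have := Finset.card_erase_of_mem hgN
          have h1 : 1 ≤ N.card := Finset.card_pos.2 hNne
          omega
        have hY'2 : (res {g} Y).2 ⊆ N.erase g := by
          intro x hx
          rw [res, Finset.mem_sdiff, Finset.mem_singleton] at hx
          rw [Finset.mem_erase]
          exact ⟨hx.2, hY2 hx.1⟩
        have hne' : (supp (res {g} Y) \ N.erase g).Nonempty := by
          obtain ⟨x, hx⟩ := hne
          rw [Finset.mem_sdiff] at hx
          refine ⟨x, ?_⟩
          rw [supp_res, Finset.mem_sdiff, Finset.mem_sdiff, Finset.mem_singleton,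
            Finset.mem_erase]
          push_neg
          exact ⟨⟨hx.1, fun hEq => hx.2 (hEq ▸ hgN)⟩, fun _ hmem => hx.2 hmem⟩
        obtain ⟨Z, hZ, hZ2⟩ := ih (contr1OM M g) (N.erase g) hcard' (res {g} Y) hY' hY'2 hne'
        refine ⟨Z, ?_, hZ2⟩
        have := contrC_step M (g := g) (T := N.erase g) hZ
        rwa [Finset.insert_erase hgN] at this
      · push_neg at hgY
        obtain ⟨g, hgN⟩ := hNne
        have hY2e : Y.2 = ∅ := by
          rw [← Finset.subset_empty]
          intro x hx
          exact absurd (Finset.mem_union.2 (Or.inr hx)) (hgY x (hY2 hx))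
        have hYg : (supp Y \ {g}).Nonempty := by
          obtain ⟨x, hx⟩ := hne
          rw [Finset.mem_sdiff] at hx
          exact ⟨x, Finset.mem_sdiff.2 ⟨hx.1, by
            simp only [Finset.mem_singleton]
            intro hEq
            exact hx.2 (hEq ▸ hgN)⟩⟩
        obtain ⟨Yt, hYt, hc1, hc2⟩ := conf_single M g hY hYg
        have hYtM : Yt ∈ (contr1OM M g).C := hYt
        have hYt2 : Yt.2 ⊆ N.erase g := by
          intro x hx
          have := hc2 hx
          rw [Finset.mem_sdiff] at this
          rw [hY2e] at this
          exact absurd this.1 (Finset.notMem_empty x)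
        have hcard' : (N.erase g).card ≤ n := by
          have := Finset.card_erase_of_mem hgN
          have h1 : 1 ≤ N.card := Finset.card_pos.2 ⟨g, hgN⟩
          omega
        have hsupp : supp Yt ⊆ supp Y := by
          intro x hx
          rcases Finset.mem_union.1 hx with h | h
          · exact Finset.mem_union.2 (Or.inl (Finset.mem_sdiff.1 (hc1 h)).1)
          · exact Finset.mem_union.2 (Or.inr (Finset.mem_sdiff.1 (hc2 h)).1)
        have hne' : (supp Yt \ N.erase g).Nonempty := by
          obtain ⟨x, hx⟩ := supp_nonempty_of_mem_contrPre hYt.1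
          refine ⟨x, Finset.mem_sdiff.2 ⟨hx, ?_⟩⟩
          intro hmem
          exact hgY x (Finset.mem_of_mem_erase hmem) (hsupp hx)
        obtain ⟨Z, hZ, hZ2⟩ := ih (contr1OM M g) (N.erase g) hcard' Yt hYtM hYt2 hne'
        refine ⟨Z, ?_, hZ2⟩
        have := contrC_step M (g := g) (T := N.erase g) hZ
        rwa [Finset.insert_erase hgN] at this

end OMAux

namespace OMAux

variable {α : Type} [DecidableEq α]

/-! ### commutation lemmas -/

lemma contrPre_reorientC (T A : Finset α) (C : Set (Finset α × Finset α)) :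
    contrPre T (reorientC A C) = reorientC A (contrPre T C) := by
  ext Z
  constructor
  · intro hZ
    rcases mem_contrPre.1 hZ with ⟨Y, hY, hne, rfl⟩
    rcases hY with ⟨Y₀, hY₀, rfl⟩
    rw [supp_reorient] at hne
    refine ⟨res T Y₀, mem_contrPre.2 ⟨Y₀, hY₀, hne, rfl⟩, ?_⟩
    rw [reorient_res]
  · rintro ⟨W, hW, rfl⟩
    rcases mem_contrPre.1 hW with ⟨Y, hY, hne, rfl⟩
    refine mem_contrPre.2 ⟨reorient A Y, ⟨Y, hY, rfl⟩, by rwa [supp_reorient], ?_⟩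
    rw [← reorient_res]

lemma contrC_reorientC (T A : Finset α) (C : Set (Finset α × Finset α)) :
    contrC T (reorientC A C) = reorientC A (contrC T C) := by
  ext Z
  constructor
  · rintro ⟨hpre, hmin⟩
    rw [contrPre_reorientC] at hpre
    rcases hpre with ⟨W, hW, rfl⟩
    refine ⟨W, ⟨hW, ?_⟩, rfl⟩
    intro V hV hsub
    have hV' : reorient A V ∈ contrPre T (reorientC A C) := by
      rw [contrPre_reorientC]
      exact ⟨V, hV, rfl⟩
    have := hmin _ hV' (by rwa [supp_reorient, supp_reorient])
    rwa [supp_reorient, supp_reorient] at this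
  · rintro ⟨W, ⟨hpre, hmin⟩, rfl⟩
    constructor
    · rw [contrPre_reorientC]
      exact ⟨W, hpre, rfl⟩
    · intro V hV hsub
      rw [contrPre_reorientC] at hV
      rcases hV with ⟨V₀, hV₀, rfl⟩
      rw [supp_reorient, supp_reorient] at hsub ⊢
      exact hmin V₀ hV₀ hsub

lemma delC_delC (D D' : Finset α) (C : Set (Finset α × Finset α)) :
    delC D (delC D' C) = delC (D ∪ D') C := by
  ext X
  simp only [delC, Set.mem_setOf_eq, Finset.disjoint_union_right]
  tauto

lemma delC_reorientC (D A : Finset α) (C : Set (Finset α × Finset α)) :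
    delC D (reorientC A C) = reorientC A (delC D C) := by
  ext X
  constructor
  · rintro ⟨⟨X₀, hX₀, rfl⟩, hdisj⟩
    rw [supp_reorient] at hdisj
    exact ⟨X₀, ⟨hX₀, hdisj⟩, rfl⟩
  · rintro ⟨X₀, ⟨hX₀, hdisj⟩, rfl⟩
    exact ⟨⟨X₀, hX₀, rfl⟩, by rwa [supp_reorient]⟩

lemma reorientC_insert {A : Finset α} {e : α} (he : e ∉ A)
    (S : Set (Finset α × Finset α)) :
    reorientC {e} (reorientC A S) = reorientC (insert e A) S := by
  ext X
  constructor
  · rintro ⟨Y, ⟨Y₀, hY₀, rfl⟩, rfl⟩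
    exact ⟨Y₀, hY₀, (reorient_insert he Y₀).symm⟩
  · rintro ⟨Y₀, hY₀, rfl⟩
    exact ⟨reorient A Y₀, ⟨Y₀, hY₀, rfl⟩, reorient_insert he Y₀⟩

lemma supp_transport_reorient {A : Finset α} {S : Set (Finset α × Finset α)}
    {X : Finset α × Finset α} (hX : X ∈ reorientC A S) :
    ∃ X₀ ∈ S, supp X₀ = supp X := by
  rcases hX with ⟨X₀, hX₀, rfl⟩
  exact ⟨X₀, hX₀, (supp_reorient A X₀).symm⟩

lemma not_acyclic_iff {S : Set (Finset α × Finset α)} :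
    ¬ Acyclic S ↔ ∃ X ∈ S, X.2 = ∅ := by
  unfold Acyclic
  push_neg
  rfl

end OMAux

namespace OMAux

lemma pos_contra {α : Type} [DecidableEq α] {B : OM α} {N : Finset α}
    (hacyc : Acyclic (contrC N B.C)) {Y : Finset α × Finset α}
    (hY : Y ∈ B.C) (h2 : Y.2 ⊆ N) (hs : (supp Y \ N).Nonempty) : False := by
  obtain ⟨Z, hZ, hZ2⟩ := posPart N.card B N (le_refl _) Y hY h2 hs
  exact hacyc Z hZ hZ2

variable {m : ℕ}

lemma mem_Ek_iff {k : ℕ} {x : Fin m} : x ∈ Ek m k ↔ (x : ℕ) < k := by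
  simp [Ek]

lemma Ek_mono {k : ℕ} : Ek m (k - 1) ⊆ Ek m k := by
  intro x hx
  rw [mem_Ek_iff] at hx ⊢
  omega

lemma Ek_succ {k : ℕ} (hk1 : 1 ≤ k) (e : Fin m) (he : (e : ℕ) = k - 1) :
    Ek m k = insert e (Ek m (k - 1)) := by
  ext x
  rw [Finset.mem_insert, mem_Ek_iff, mem_Ek_iff]
  constructor
  · intro hx
    by_cases hxe : (x : ℕ) = k - 1
    · left
      apply Fin.ext
      rw [he, hxe]
    · right
      omega
  · rintro (rfl | hx)
    · omega
    · omega

lemma e_notMem_Ek_pred {k : ℕ} {e : Fin m} (he : (e : ℕ) = k - 1) :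
    e ∉ Ek m (k - 1) := by
  rw [mem_Ek_iff, he]
  omega

lemma e_mem_Ek {k : ℕ} (hk1 : 1 ≤ k) {e : Fin m} (he : (e : ℕ) = k - 1) :
    e ∈ Ek m k := by
  rw [mem_Ek_iff, he]
  omega

lemma subset_Ek_pred {k : ℕ} {e : Fin m} (he : (e : ℕ) = k - 1)
    {N : Finset (Fin m)} (hN : N ⊆ Ek m k) (heN : e ∉ N) : N ⊆ Ek m (k - 1) := by
  intro x hx
  rw [mem_Ek_iff]
  have h1 : (x : ℕ) < k := mem_Ek_iff.1 (hN hx)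
  have h2 : (x : ℕ) ≠ k - 1 := by
    intro hEq
    apply heN
    have : x = e := Fin.ext (by rw [hEq, he])
    exact this ▸ hx
  omega

lemma erase_subset_Ek_pred {k : ℕ} {e : Fin m} (he : (e : ℕ) = k - 1)
    {N : Finset (Fin m)} (hN : N ⊆ Ek m k) : N.erase e ⊆ Ek m (k - 1) :=
  subset_Ek_pred he (fun x hx => hN (Finset.mem_of_mem_erase hx))
    (Finset.notMem_erase e N)

lemma isNBC_mono {M : OM (Fin m)} {N N' : Finset (Fin m)} (hsub : N' ⊆ N)
    (h : IsNBC M N) : IsNBC M N' := by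
  intro X hX hne hcon
  exact h X hX hne (hcon.trans hsub)

lemma nbc_no_small (M : OM (Fin m)) {k : ℕ} {e : Fin m} (he : (e : ℕ) = k - 1)
    {N : Finset (Fin m)} (hN : N ⊆ Ek m k) (hNBC : IsNBC M N)
    {X₀ : Finset (Fin m) × Finset (Fin m)} (hX₀ : X₀ ∈ M.C)
    (hsub : supp X₀ ⊆ N ∪ {e}) : False := by
  have hsne : (supp X₀).Nonempty := OM.supp_nonempty M hX₀
  apply hNBC X₀ hX₀ hsne
  intro x hx
  rw [Finset.mem_erase] at hx
  rcases Finset.mem_union.1 (hsub hx.2) with hxN | hxe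
  · exact hxN
  · exfalso
    rw [Finset.mem_singleton] at hxe
    subst hxe
    have hle : ∀ y ∈ supp X₀, y ≤ x := by
      intro y hy
      rcases Finset.mem_union.1 (hsub hy) with h | h
      · have h1 : (y : ℕ) < k := mem_Ek_iff.1 (hN h)
        have h2 : (x : ℕ) = k - 1 := he
        exact Fin.le_def.2 (by omega)
      · rw [Finset.mem_singleton] at h
        exact le_of_eq h
    have hmax : (supp X₀).max' hsne = x :=
      le_antisymm (Finset.max'_le _ hsne x hle) (Finset.le_max' _ x hx.2)
    exact hx.1 hmax.symm

lemma MNA_eq_contr (M : OM (Fin m)) (k : ℕ) (N A : Finset (Fin m)) :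
    MNA M k N A = contrC N (reorientC A (delC (Ek m k \ N) M.C)) :=
  (contrC_reorientC N A (delC (Ek m k \ N) M.C)).symm

lemma Ek_sdiff_of_mem {k : ℕ} (hk1 : 1 ≤ k) {e : Fin m} (he : (e : ℕ) = k - 1)
    {N : Finset (Fin m)} (heN : e ∈ N) :
    Ek m k \ N = Ek m (k - 1) \ N.erase e := by
  rw [Ek_succ hk1 e he]
  ext x
  simp only [Finset.mem_sdiff, Finset.mem_insert, Finset.mem_erase]
  constructor
  · rintro ⟨rfl | hx, hxN⟩
    · exact absurd heN hxN
    · refine ⟨hx, ?_⟩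
      push_neg
      intro _
      exact fun h => hxN h
  · rintro ⟨hx, hxN⟩
    have hxe : x ≠ e := fun hEq => e_notMem_Ek_pred he (hEq ▸ hx)
    refine ⟨Or.inr hx, ?_⟩
    intro hmem
    exact absurd ⟨hxe, hmem⟩ hxN

lemma Ek_sdiff_of_notMem {k : ℕ} (hk1 : 1 ≤ k) {e : Fin m} (he : (e : ℕ) = k - 1)
    {N : Finset (Fin m)} (heN : e ∉ N) :
    Ek m k \ N = insert e (Ek m (k - 1) \ N) := by
  rw [Ek_succ hk1 e he]
  ext x
  simp only [Finset.mem_sdiff, Finset.mem_insert]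
  constructor
  · rintro ⟨rfl | hx, hxN⟩
    · exact Or.inl rfl
    · exact Or.inr ⟨hx, hxN⟩
  · rintro (rfl | ⟨hx, hxN⟩)
    · exact ⟨Or.inl rfl, heN⟩
    · exact ⟨Or.inr hx, hxN⟩

lemma supp_transport_B {A D : Finset (Fin m)} {M : OM (Fin m)}
    {X : Finset (Fin m) × Finset (Fin m)}
    (hX : X ∈ reorientC A (delC D M.C)) : ∃ X₀ ∈ M.C, supp X₀ = supp X := by
  obtain ⟨X₁, hX₁, hs⟩ := supp_transport_reorient hX
  exact ⟨X₁, hX₁.1, hs⟩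

end OMAux

namespace OMAux

variable {m : ℕ}

/-- H1: if `e ∈ N`, acyclicity at level `k` gives acyclicity for `N.erase e` at level `k-1`. -/
lemma H1 (M : OM (Fin m)) {k : ℕ} (hk1 : 1 ≤ k) {e : Fin m} (he : (e : ℕ) = k - 1)
    {N A : Finset (Fin m)} (hNk : N ⊆ Ek m k) (hNBC : IsNBC M N) (heN : e ∈ N)
    (hacyc : Acyclic (MNA M k N A)) : Acyclic (MNA M (k - 1) (N.erase e) A) := by
  have hD : Ek m (k - 1) \ N.erase e = Ek m k \ N := (Ek_sdiff_of_mem hk1 he heN).symm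
  rw [MNA_eq_contr, hD]
  rw [MNA_eq_contr] at hacyc
  set B : OM (Fin m) := reorOM (delOM M (Ek m k \ N)) A with hB
  have hBC : B.C = reorientC A (delC (Ek m k \ N) M.C) := rfl
  rw [← hBC] at hacyc ⊢
  intro P hP hP2
  rcases mem_contrPre.1 hP.1 with ⟨Xh, hXh, hXne, rfl⟩
  have h2N : Xh.2 ⊆ N := by
    have : Xh.2 \ N.erase e = ∅ := hP2
    rw [Finset.sdiff_eq_empty_iff_subset] at this
    exact this.trans (Finset.erase_subset e N)
  by_cases hout : (supp Xh \ N).Nonempty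
  · exact pos_contra hacyc hXh h2N hout
  · rw [Finset.not_nonempty_iff_eq_empty, Finset.sdiff_eq_empty_iff_subset] at hout
    obtain ⟨X₀, hX₀, hs⟩ := supp_transport_B (hBC ▸ hXh)
    exact nbc_no_small M he hNk hNBC hX₀
      (hs ▸ hout.trans (Finset.subset_union_left))

/-- H3: if `e ∈ N`, acyclicity at level `k` gives acyclicity of the `e`-reorientation for
`N.erase e` at level `k-1`. -/
lemma H3 (M : OM (Fin m)) {k : ℕ} (hk1 : 1 ≤ k) {e : Fin m} (he : (e : ℕ) = k - 1)
    {N A : Finset (Fin m)} (hNk : N ⊆ Ek m k) (hNBC : IsNBC M N) (heN : e ∈ N)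
    (hacyc : Acyclic (MNA M k N A)) :
    Acyclic (reorientC {e} (MNA M (k - 1) (N.erase e) A)) := by
  have hD : Ek m (k - 1) \ N.erase e = Ek m k \ N := (Ek_sdiff_of_mem hk1 he heN).symm
  rw [MNA_eq_contr, hD]
  rw [MNA_eq_contr] at hacyc
  rw [← contrC_reorientC]
  set B' : OM (Fin m) := reorOM (reorOM (delOM M (Ek m k \ N)) A) {e} with hB'
  have hBC : B'.C = reorientC {e} (reorientC A (delC (Ek m k \ N) M.C)) := rfl
  rw [← hBC]
  intro P hP hP2
  rcases mem_contrPre.1 hP.1 with ⟨Xh, hXh, hXne, rfl⟩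
  have h2N : Xh.2 ⊆ N := by
    have : Xh.2 \ N.erase e = ∅ := hP2
    rw [Finset.sdiff_eq_empty_iff_subset] at this
    exact this.trans (Finset.erase_subset e N)
  by_cases hout : (supp Xh \ N).Nonempty
  · obtain ⟨Z, hZ, hZ2⟩ := posPart N.card B' N (le_refl _) Xh hXh h2N hout
    have hdisj : Disjoint (supp Z) N := disjoint_supp_of_mem_contrPre hZ.1
    have hZ' : Z ∈ reorientC {e} (contrC N (reorientC A (delC (Ek m k \ N) M.C))) := by
      rw [← contrC_reorientC]
      exact hZ
    rw [mem_reorientC] at hZ'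
    have heZ : reorient {e} Z = Z := by
      apply reorient_of_disjoint
      rw [Finset.disjoint_singleton_right]
      exact Finset.disjoint_left.1 hdisj.symm heN
    rw [heZ] at hZ'
    exact hacyc Z hZ' hZ2
  · rw [Finset.not_nonempty_iff_eq_empty, Finset.sdiff_eq_empty_iff_subset] at hout
    obtain ⟨X₁, hX₁, hs₁⟩ := supp_transport_reorient (hBC ▸ hXh)
    obtain ⟨X₀, hX₀, hs₀⟩ := supp_transport_B hX₁
    have : supp X₀ ⊆ N ∪ {e} := by
      rw [hs₀, hs₁]
      exact hout.trans Finset.subset_union_left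
    exact nbc_no_small M he hNk hNBC hX₀ this

end OMAux

namespace OMAux

variable {m : ℕ}

/-- H2: if `e ∉ N` and the `e`-reorientation at level `k-1` is not acyclic, then
acyclicity at level `k` gives acyclicity at level `k-1`. -/
lemma H2 (M : OM (Fin m)) {k : ℕ} (hk1 : 1 ≤ k) {e : Fin m} (he : (e : ℕ) = k - 1)
    {N A : Finset (Fin m)} (hNk : N ⊆ Ek m k) (hNBC : IsNBC M N) (heN : e ∉ N)
    (hacyck : Acyclic (MNA M k N A))
    (hnot : ¬ Acyclic (reorientC {e} (MNA M (k - 1) N A))) :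
    Acyclic (MNA M (k - 1) N A) := by
  set Ct : OM (Fin m) := reorOM (delOM M (Ek m (k - 1) \ N)) A with hCt
  have hCtC : Ct.C = reorientC A (delC (Ek m (k - 1) \ N) M.C) := rfl
  set CD : OM (Fin m) := delOM Ct {e} with hCD
  have hCDC : CD.C = delC {e} Ct.C := rfl
  have hMk : MNA M k N A = contrC N CD.C := by
    rw [MNA_eq_contr, Ek_sdiff_of_notMem hk1 he heN, Finset.insert_eq, ← delC_delC,
      ← delC_reorientC]
    rfl
  have hMk1 : MNA M (k - 1) N A = contrC N Ct.C := MNA_eq_contr M (k - 1) N A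
  rw [hMk] at hacyck
  rw [hMk1] at hnot ⊢
  -- extract the witness from hnot
  obtain ⟨Q, hQ, hQ2⟩ := not_acyclic_iff.1 hnot
  rw [mem_reorientC] at hQ
  set W := reorient {e} Q with hW
  have hW2 : W.2 ⊆ {e} := by
    intro x hx
    rw [hW, mem_reorient_snd] at hx
    rcases hx with ⟨h1, _⟩ | ⟨_, h2⟩
    · rw [hQ2] at h1
      exact absurd h1 (Finset.notMem_empty x)
    · exact h2
  have hW1e : e ∉ W.1 := by
    intro hx
    rw [hW, mem_reorient_fst] at hx
    rcases hx with ⟨_, h2⟩ | ⟨h1, _⟩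
    · exact h2 (Finset.mem_singleton_self e)
    · rw [hQ2] at h1
      exact absurd h1 (Finset.notMem_empty e)
  rcases mem_contrPre.1 hQ.1 with ⟨Yh, hYh, hYne, hWeq⟩
  have hYh2 : Yh.2 ⊆ N ∪ {e} := by
    intro x hx
    by_cases hxN : x ∈ N
    · exact Finset.mem_union.2 (Or.inl hxN)
    · have : x ∈ W.2 := by
        rw [hWeq]
        exact Finset.mem_sdiff.2 ⟨hx, hxN⟩
      exact Finset.mem_union.2 (Or.inr (hW2 this))
  have hYh1e : e ∉ Yh.1 := by
    intro hx
    apply hW1e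
    rw [hWeq]
    exact Finset.mem_sdiff.2 ⟨hx, heN⟩
  -- main goal
  intro P hP hP2
  rcases mem_contrPre.1 hP.1 with ⟨Xh, hXh, hXne, rfl⟩
  have hXh2 : Xh.2 ⊆ N := by
    have : Xh.2 \ N = ∅ := hP2
    rwa [Finset.sdiff_eq_empty_iff_subset] at this
  have hout : (supp Xh \ N).Nonempty := hXne
  by_cases he1 : e ∈ supp Xh
  · have heX1 : e ∈ Xh.1 := by
      rcases Finset.mem_union.1 he1 with h | h
      · exact h
      · exact absurd (hXh2 h) heN
    by_cases he2 : e ∈ supp Yh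
    · have heY2 : e ∈ Yh.2 := by
        rcases Finset.mem_union.1 he2 with h | h
        · exact absurd h hYh1e
        · exact h
      have hneq : Xh ≠ Yh := by
        intro hEq
        have hd := Ct.disj Xh hXh
        exact Finset.disjoint_left.1 hd heX1 (hEq ▸ heY2)
      have hneq' : Xh ≠ (Yh.2, Yh.1) := by
        intro hEq
        have hsupp : supp Xh ⊆ N ∪ {e} := by
          intro x hx
          rcases Finset.mem_union.1 hx with h | h
          · have : x ∈ Yh.2 := by rw [hEq] at h; exact h
            exact hYh2 this
          · exact Finset.mem_union.2 (Or.inl (hXh2 h))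
        obtain ⟨X₀, hX₀, hs₀⟩ := supp_transport_B (hCtC ▸ hXh)
        exact nbc_no_small M he hNk hNBC hX₀ (hs₀ ▸ hsupp)
      obtain ⟨Z, hZmem, hz1, hz2⟩ := Ct.elimAx Xh hXh Yh hYh hneq hneq' e
        (Finset.mem_inter.2 ⟨heX1, heY2⟩)
      have hZ2N : Z.2 ⊆ N := by
        intro x hx
        have := hz2 hx
        rw [Finset.mem_erase, Finset.mem_union] at this
        rcases this.2 with h | h
        · exact hXh2 h
        · rcases Finset.mem_union.1 (hYh2 h) with h' | h'
          · exact h'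
          · rw [Finset.mem_singleton] at h'
            exact absurd h' this.1
      have heZ : e ∉ supp Z := by
        intro hx
        rcases Finset.mem_union.1 hx with h | h
        · exact (Finset.mem_erase.1 (hz1 h)).1 rfl
        · exact heN (hZ2N h)
      by_cases hZout : (supp Z \ N).Nonempty
      · have hZCD : Z ∈ CD.C := by
          rw [hCDC]
          refine ⟨hZmem, ?_⟩
          rw [Finset.disjoint_singleton_right]
          exact heZ
        exact pos_contra hacyck hZCD hZ2N hZout
      · rw [Finset.not_nonempty_iff_eq_empty, Finset.sdiff_eq_empty_iff_subset] at hZout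
        obtain ⟨X₀, hX₀, hs₀⟩ := supp_transport_B (hCtC ▸ hZmem)
        exact nbc_no_small M he hNk hNBC hX₀
          (hs₀ ▸ hZout.trans Finset.subset_union_left)
    · have hYh2' : Yh.2 ⊆ N := by
        intro x hx
        rcases Finset.mem_union.1 (hYh2 hx) with h | h
        · exact h
        · rw [Finset.mem_singleton] at h
          exact absurd (h ▸ Finset.mem_union.2 (Or.inr hx)) he2
      have hYCD : Yh ∈ CD.C := by
        rw [hCDC]
        refine ⟨hYh, ?_⟩
        rw [Finset.disjoint_singleton_right]
        exact he2
      exact pos_contra hacyck hYCD hYh2' hYne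
  · have hXCD : Xh ∈ CD.C := by
      rw [hCDC]
      refine ⟨hXh, ?_⟩
      rw [Finset.disjoint_singleton_right]
      exact he1
    exact pos_contra hacyck hXCD hXh2 hout

end OMAux

namespace OMAux

variable {m : ℕ}

lemma MNA_insert_eq (M : OM (Fin m)) (k : ℕ) (N : Finset (Fin m)) {A : Finset (Fin m)}
    {e : Fin m} (heA : e ∉ A) :
    MNA M k N (insert e A) = reorientC {e} (MNA M k N A) :=
  (reorientC_insert heA _).symm

lemma MNA_reorient_erase (M : OM (Fin m)) (k : ℕ) (N : Finset (Fin m)) {A : Finset (Fin m)}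
    {e : Fin m} (heA : e ∈ A) :
    reorientC {e} (MNA M k N (A.erase e)) = MNA M k N A := by
  unfold MNA
  rw [reorientC_insert (Finset.notMem_erase e A), Finset.insert_erase heA]

lemma theta_of_mem {M : OM (Fin m)} {j : ℕ} {e : Fin m}
    {p : Finset (Fin m) × Finset (Fin m)} (h : e ∈ p.1) :
    theta M j e p = (p.1.erase e, p.2) := by
  simp only [theta]
  rw [if_pos h]

lemma theta_acyc {M : OM (Fin m)} {j : ℕ} {e : Fin m}
    {p : Finset (Fin m) × Finset (Fin m)} (h : e ∉ p.1)
    (h2 : Acyclic (reorientC {e} (MNA M j p.1 p.2))) :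
    theta M j e p = (p.1, insert e p.2) := by
  simp only [theta]
  rw [if_neg h, if_pos h2]

lemma theta_nonacyc {M : OM (Fin m)} {j : ℕ} {e : Fin m}
    {p : Finset (Fin m) × Finset (Fin m)} (h : e ∉ p.1)
    (h2 : ¬ Acyclic (reorientC {e} (MNA M j p.1 p.2))) :
    theta M j e p = p := by
  simp only [theta]
  rw [if_neg h, if_neg h2]

lemma psi_of_mem {M : OM (Fin m)} {j : ℕ} {e : Fin m}
    {p : Finset (Fin m) × Finset (Fin m)} (h : e ∈ p.2) :
    psi M j e p = (p.1, p.2.erase e) := by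
  simp only [psi]
  rw [if_pos h]

lemma psi_acyc {M : OM (Fin m)} {j : ℕ} {e : Fin m}
    {p : Finset (Fin m) × Finset (Fin m)} (h : e ∉ p.2)
    (h2 : Acyclic (reorientC {e} (MNA M j p.1 p.2))) :
    psi M j e p = (insert e p.1, p.2) := by
  simp only [psi]
  rw [if_neg h, if_pos h2]

lemma psi_nonacyc {M : OM (Fin m)} {j : ℕ} {e : Fin m}
    {p : Finset (Fin m) × Finset (Fin m)} (h : e ∉ p.2)
    (h2 : ¬ Acyclic (reorientC {e} (MNA M j p.1 p.2))) :
    psi M j e p = p := by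
  simp only [psi]
  rw [if_neg h, if_neg h2]

lemma compl_Ek_mono {k : ℕ} : (Ek m k)ᶜ ⊆ (Ek m (k - 1))ᶜ := by
  intro x hx
  rw [Finset.mem_compl] at hx ⊢
  exact fun h => hx (Ek_mono h)

end OMAux

open OMAux in
/-- **`θ_k` is a two-sided inverse of `ψ_k`**: `θ_k` maps `𝒩_k` into `𝒩_{k−1}`,
`θ_k ∘ ψ_k` is the identity on `𝒩_{k−1}`, and `ψ_k ∘ θ_k` is the identity on `𝒩_k`. -/
theorem stmt_6 (m : ℕ) (M : OM (Fin m)) (hM : Loopless M)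
    (k : ℕ) (hk1 : 1 ≤ k) (hkm : k ≤ m) :
    Set.MapsTo (theta M (k - 1) ⟨k - 1, by omega⟩) (NFam M k) (NFam M (k - 1)) ∧
    (∀ p ∈ NFam M (k - 1),
      theta M (k - 1) ⟨k - 1, by omega⟩ (psi M (k - 1) ⟨k - 1, by omega⟩ p) = p) ∧
    (∀ p ∈ NFam M k,
      psi M (k - 1) ⟨k - 1, by omega⟩ (theta M (k - 1) ⟨k - 1, by omega⟩ p) = p) := by
  have hpf : k - 1 < m := by omega
  have he : ((⟨k - 1, hpf⟩ : Fin m) : ℕ) = k - 1 := rfl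
  constructor
  · show Set.MapsTo (theta M (k - 1) ⟨k - 1, hpf⟩) (NFam M k) (NFam M (k - 1))
    intro p hp
    obtain ⟨hN, hNBC, hA, hac⟩ := hp
    have heA : (⟨k - 1, hpf⟩ : Fin m) ∉ p.2 := fun h =>
      Finset.mem_compl.1 (hA h) (e_mem_Ek hk1 he)
    by_cases h1 : (⟨k - 1, hpf⟩ : Fin m) ∈ p.1
    · rw [theta_of_mem h1]
      exact ⟨erase_subset_Ek_pred he hN, isNBC_mono (Finset.erase_subset _ _) hNBC,
        fun x hx => compl_Ek_mono (hA hx), H1 M hk1 he hN hNBC h1 hac⟩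
    · by_cases h2 : Acyclic (reorientC {(⟨k - 1, hpf⟩ : Fin m)} (MNA M (k - 1) p.1 p.2))
      · rw [theta_acyc h1 h2]
        refine ⟨subset_Ek_pred he hN h1, hNBC, ?_, ?_⟩
        · refine Finset.insert_subset_iff.2 ⟨Finset.mem_compl.2 (e_notMem_Ek_pred he),
            fun x hx => compl_Ek_mono (hA hx)⟩
        · rw [MNA_insert_eq M (k - 1) p.1 heA]
          exact h2
      · rw [theta_nonacyc h1 h2]
        exact ⟨subset_Ek_pred he hN h1, hNBC, fun x hx => compl_Ek_mono (hA hx),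
          H2 M hk1 he hN hNBC h1 hac h2⟩
  constructor
  · show ∀ p ∈ NFam M (k - 1),
      theta M (k - 1) ⟨k - 1, hpf⟩ (psi M (k - 1) ⟨k - 1, hpf⟩ p) = p
    intro p hp
    obtain ⟨hN, hNBC, hA, hac⟩ := hp
    have he1 : (⟨k - 1, hpf⟩ : Fin m) ∉ p.1 := fun h => e_notMem_Ek_pred he (hN h)
    by_cases c1 : (⟨k - 1, hpf⟩ : Fin m) ∈ p.2
    · rw [psi_of_mem c1]
      have hth : theta M (k - 1) ⟨k - 1, hpf⟩ (p.1, p.2.erase ⟨k - 1, hpf⟩) =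
          (p.1, insert ⟨k - 1, hpf⟩ (p.2.erase ⟨k - 1, hpf⟩)) := by
        apply theta_acyc
        · exact he1
        · show Acyclic (reorientC {(⟨k - 1, hpf⟩ : Fin m)}
            (MNA M (k - 1) p.1 (p.2.erase ⟨k - 1, hpf⟩)))
          rw [MNA_reorient_erase M (k - 1) p.1 c1]
          exact hac
      rw [hth, Finset.insert_erase c1]
    · by_cases c2 : Acyclic (reorientC {(⟨k - 1, hpf⟩ : Fin m)} (MNA M (k - 1) p.1 p.2))
      · rw [psi_acyc c1 c2]
        have hth := theta_of_mem (M := M) (j := k - 1)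
          (p := (insert (⟨k - 1, hpf⟩ : Fin m) p.1, p.2)) (Finset.mem_insert_self _ _)
        rw [hth, Finset.erase_insert he1]
      · rw [psi_nonacyc c1 c2, theta_nonacyc he1 c2]
  · show ∀ p ∈ NFam M k,
      psi M (k - 1) ⟨k - 1, hpf⟩ (theta M (k - 1) ⟨k - 1, hpf⟩ p) = p
    intro p hp
    obtain ⟨hN, hNBC, hA, hac⟩ := hp
    have heA : (⟨k - 1, hpf⟩ : Fin m) ∉ p.2 := fun h =>
      Finset.mem_compl.1 (hA h) (e_mem_Ek hk1 he)
    by_cases h1 : (⟨k - 1, hpf⟩ : Fin m) ∈ p.1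
    · rw [theta_of_mem h1]
      have hps : psi M (k - 1) ⟨k - 1, hpf⟩ (p.1.erase ⟨k - 1, hpf⟩, p.2) =
          (insert ⟨k - 1, hpf⟩ (p.1.erase ⟨k - 1, hpf⟩), p.2) := by
        apply psi_acyc
        · exact heA
        · show Acyclic (reorientC {(⟨k - 1, hpf⟩ : Fin m)}
            (MNA M (k - 1) (p.1.erase ⟨k - 1, hpf⟩) p.2))
          exact H3 M hk1 he hN hNBC h1 hac
      rw [hps, Finset.insert_erase h1]
    · by_cases h2 : Acyclic (reorientC {(⟨k - 1, hpf⟩ : Fin m)} (MNA M (k - 1) p.1 p.2))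
      · rw [theta_acyc h1 h2]
        have hps := psi_of_mem (M := M) (j := k - 1)
          (p := (p.1, insert (⟨k - 1, hpf⟩ : Fin m) p.2)) (Finset.mem_insert_self _ _)
        rw [hps, Finset.erase_insert heA]
      · rw [theta_nonacyc h1 h2, psi_nonacyc heA h2]
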